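/- arXiv:1909.06578 — 7 statements merged into one kernel-verified Lean document; each statement's English description precedes it below -/
import Mathlib

section
/- If T is a tree on n vertices containing a perfect matching, then 2 is an eigenvalue of the Laplacian matrix L(T), and in the nonincreasing ordering of Laplacian eigenvalues, μ_{n/2}(T) = 2. -/
open Polynomial
open scoped Classical

section Helpers
open Matrix Finset

variable {V : Type*} [Fintype V]

private lemma dot_comb {ι : Type*} [Fintype ι] (v : ι → (V → ℝ))
    (hortho : ∀ i j, v i ⬝ᵥ v j = if i = j then (1:ℝ) else 0) (c d : ι → ℝ) :
    (fun k => ∑ i, c i * v i k) ⬝ᵥ (fun k => ∑ j, d j * v j k) = ∑ i, c i * d i := by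
  have : ∀ i j : ι, (∑ k, v i k * v j k) = if i = j then (1:ℝ) else 0 := fun i j => hortho i j
  calc (fun k => ∑ i, c i * v i k) ⬝ᵥ (fun k => ∑ j, d j * v j k)
      = ∑ k, (∑ i, c i * v i k) * (∑ j, d j * v j k) := rfl
    _ = ∑ k, ∑ i, ∑ j, (c i * d j) * (v i k * v j k) := by
        congr 1; ext k; rw [Finset.sum_mul]; congr 1; ext i
        rw [Finset.mul_sum]; congr 1; ext j; ring
    _ = ∑ i, ∑ j, ∑ k, (c i * d j) * (v i k * v j k) := by
        rw [Finset.sum_comm]; congr 1; ext i; rw [Finset.sum_comm]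
    _ = ∑ i, ∑ j, (c i * d j) * (if i = j then (1:ℝ) else 0) := by
        congr 1; ext i; congr 1; ext j; rw [← Finset.mul_sum, this]
    _ = ∑ i, c i * d i := by
        congr 1; ext i
        simp

/-- If the quadratic form of `A` is `≤ c ⟨x,x⟩` on the kernel of a linear map to `κ → ℝ`,
then the number of orthonormal eigenvectors with eigenvalue `> c` is at most `card κ`. -/
private lemma quad_count (A : Matrix V V ℝ) {κ : Type*} [Fintype κ]
    (Φ : (V → ℝ) →ₗ[ℝ] (κ → ℝ)) (c : ℝ)
    (hform : ∀ x : V → ℝ, Φ x = 0 → x ⬝ᵥ A *ᵥ x ≤ c * (x ⬝ᵥ x))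
    {ι : Type*} [Fintype ι] (v : ι → (V → ℝ)) (ev : ι → ℝ)
    (hv : ∀ i, A *ᵥ v i = ev i • v i)
    (hortho : ∀ i j, v i ⬝ᵥ v j = if i = j then (1:ℝ) else 0)
    (hev : ∀ i, c < ev i) :
    Fintype.card ι ≤ Fintype.card κ := by
  by_contra hlt
  push_neg at hlt
  set Θ : (ι → ℝ) →ₗ[ℝ] (V → ℝ) :=
    { toFun := fun b => fun k => ∑ i, b i * v i k
      map_add' := by
        intro a b; funext k; simp [add_mul, Finset.sum_add_distrib]
      map_smul' := by
        intro r a; funext k; simp [Finset.mul_sum, mul_assoc] } with hΘ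
  have hrank := LinearMap.finrank_range_add_finrank_ker (Φ.comp Θ)
  rw [Module.finrank_fintype_fun_eq_card] at hrank
  have hr : Module.finrank ℝ (LinearMap.range (Φ.comp Θ)) ≤ Fintype.card κ := by
    have := Submodule.finrank_le (LinearMap.range (Φ.comp Θ))
    rwa [Module.finrank_fintype_fun_eq_card] at this
  have hker : 0 < Module.finrank ℝ (LinearMap.ker (Φ.comp Θ)) := by omega
  have : Nontrivial (LinearMap.ker (Φ.comp Θ)) := Module.nontrivial_of_finrank_pos hker
  obtain ⟨⟨b, hb⟩, hbne⟩ := exists_ne (0 : LinearMap.ker (Φ.comp Θ))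
  have hb0 : b ≠ 0 := fun h => hbne (Subtype.ext h)
  set x : V → ℝ := Θ b with hx
  have hΦx : Φ x = 0 := hb
  have hq : x ⬝ᵥ A *ᵥ x = ∑ i, ev i * (b i)^2 := by
    have hAx : A *ᵥ x = fun k => ∑ i, (b i * ev i) * v i k := by
      funext k
      have hxsum : x = ∑ i, b i • v i := by
        funext k; simp [hx, hΘ, Finset.sum_apply]
      have : A *ᵥ x = ∑ i, b i • (A *ᵥ v i) := by
        rw [hxsum]
        calc A *ᵥ ∑ i, b i • v i = A.mulVecLin (∑ i, b i • v i) := rfl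
          _ = ∑ i, b i • A.mulVecLin (v i) := by
              rw [map_sum]
              exact Finset.sum_congr rfl fun i _ => A.mulVecLin.map_smul (b i) (v i)
          _ = ∑ i, b i • (A *ᵥ v i) := rfl
      rw [this]
      simp only [hv, Finset.sum_apply, Pi.smul_apply, smul_eq_mul]
      congr 1; ext i; ring
    rw [hx, hAx]
    show (fun k => ∑ i, b i * v i k) ⬝ᵥ _ = _
    rw [dot_comb v hortho b (fun i => b i * ev i)]
    congr 1; ext i; ring
  have hxx : x ⬝ᵥ x = ∑ i, (b i)^2 := by
    rw [hx]
    show (fun k => ∑ i, b i * v i k) ⬝ᵥ (fun k => ∑ i, b i * v i k) = _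
    rw [dot_comb v hortho b b]
    congr 1; ext i; ring
  have hle := hform x hΦx
  rw [hq, hxx, Finset.mul_sum] at hle
  have : ∃ i0 : ι, b i0 ≠ 0 := by
    by_contra hall; push_neg at hall
    exact hb0 (funext fun i => hall i)
  obtain ⟨i0, hi0⟩ := this
  have hstrict : ∑ i, c * (b i)^2 < ∑ i, ev i * (b i)^2 := by
    apply Finset.sum_lt_sum
    · intro i _
      have := (hev i).le
      nlinarith [sq_nonneg (b i)]
    · exact ⟨i0, Finset.mem_univ i0, by nlinarith [(hev i0), sq_pos_of_ne_zero hi0]⟩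
  linarith

variable [DecidableEq V]

private lemma lap_quad (T : SimpleGraph V) [DecidableRel T.Adj] (x : V → ℝ) :
    x ⬝ᵥ (T.lapMatrix ℝ *ᵥ x) = (∑ i, ∑ j, if T.Adj i j then (x i - x j)^2 else 0)/2 := by
  rw [← Matrix.toLinearMap₂'_apply', SimpleGraph.lapMatrix_toLinearMap₂']

private lemma lap_form (T : SimpleGraph V) [DecidableRel T.Adj] (f : V → V)
    (hf : Function.Involutive f) (hfa : ∀ v, T.Adj v (f v)) (x : V → ℝ) :
    x ⬝ᵥ (T.lapMatrix ℝ *ᵥ x) =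
      2*(x ⬝ᵥ x) - (∑ i, (x i + x (f i))^2)/2
        + (∑ i, ∑ j, if T.Adj i j ∧ j ≠ f i then (x i - x j)^2 else 0)/2 := by
  rw [lap_quad]
  have hsplit : ∀ i : V, (∑ j, if T.Adj i j then (x i - x j)^2 else 0)
      = (x i - x (f i))^2 + ∑ j, if T.Adj i j ∧ j ≠ f i then (x i - x j)^2 else 0 := by
    intro i
    have : ∀ j : V, (if T.Adj i j then (x i - x j)^2 else 0)
        = (if j = f i then (x i - x j)^2 else 0)
          + (if T.Adj i j ∧ j ≠ f i then (x i - x j)^2 else 0) := by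
      intro j
      by_cases h : j = f i
      · subst h; simp [hfa i]
      · simp [h]
    rw [Finset.sum_congr rfl fun j _ => this j, Finset.sum_add_distrib,
      Finset.sum_ite_eq' Finset.univ (f i) (fun j => (x i - x j)^2)]
    simp
  rw [Finset.sum_congr rfl fun i _ => hsplit i, Finset.sum_add_distrib]
  have hxfx : ∑ i, x (f i) ^ 2 = ∑ i, x i ^ 2 :=
    Fintype.sum_equiv (Function.Involutive.toPerm f hf) (fun i => x (f i) ^ 2)
      (fun i => x i ^ 2) (fun i => rfl)
  have h2 : ∑ i, (x i - x (f i))^2 = 4 * (∑ i, x i ^2) - ∑ i, (x i + x (f i))^2 := by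
    have : ∀ i : V, (x i - x (f i))^2 = 2*x i^2 + 2*x (f i)^2 - (x i + x (f i))^2 := by
      intro i; ring
    rw [Finset.sum_congr rfl fun i _ => this i]
    rw [Finset.sum_sub_distrib, Finset.sum_add_distrib, ← Finset.mul_sum, ← Finset.mul_sum, hxfx]
    ring
  have hxx : x ⬝ᵥ x = ∑ i, x i ^ 2 := by
    simp [dotProduct, sq]
  rw [h2, hxx]
  ring

private lemma charmatrix_diagonal' (d : V → ℝ) :
    charmatrix (Matrix.diagonal d) = Matrix.diagonal (fun i => (X : ℝ[X]) - C (d i)) := by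
  ext i j
  by_cases h : i = j
  · subst h; simp
  · simp [h, Matrix.diagonal_apply_ne _ h]

private lemma charpoly_diagonal' (d : V → ℝ) :
    (Matrix.diagonal d).charpoly = ∏ i, ((X : ℝ[X]) - C (d i)) := by
  rw [Matrix.charpoly, charmatrix_diagonal', Matrix.det_diagonal]

private lemma charpoly_hermitian (A : Matrix V V ℝ) (hA : A.IsHermitian) :
    A.charpoly = ∏ i, ((X : ℝ[X]) - C (hA.eigenvalues i)) := by
  have hspec := hA.spectral_theorem
  set U : Matrix V V ℝ := (Matrix.IsHermitian.eigenvectorUnitary hA : Matrix V V ℝ) with hU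
  have hUU : U * star U = 1 := (Matrix.mem_unitaryGroup_iff).mp (hA.eigenvectorUnitary).2
  set D : Matrix V V ℝ := Matrix.diagonal (RCLike.ofReal ∘ hA.eigenvalues) with hD
  set u : Matrix V V ℝ[X] := (C : ℝ →+* ℝ[X]).mapMatrix U with hu
  set u' : Matrix V V ℝ[X] := (C : ℝ →+* ℝ[X]).mapMatrix (star U) with hu'
  have h1 : u * u' = 1 := by rw [hu, hu', ← _root_.map_mul, hUU, _root_.map_one]
  have hsc : Matrix.scalar V (X : ℝ[X]) = (X : ℝ[X]) • (1 : Matrix V V ℝ[X]) := by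
    rw [Matrix.scalar_apply, ← Matrix.smul_one_eq_diagonal]
  have hscalar : u * Matrix.scalar V (X : ℝ[X]) * u' = Matrix.scalar V (X : ℝ[X]) := by
    calc u * Matrix.scalar V (X : ℝ[X]) * u' = (X : ℝ[X]) • (u * u') := by
          rw [hsc, mul_smul_comm, mul_one, smul_mul_assoc]
      _ = Matrix.scalar V (X : ℝ[X]) := by rw [h1, hsc]
  have hcm : charmatrix A = u * charmatrix D * u' := by
    rw [charmatrix, charmatrix, mul_sub, sub_mul, hscalar]
    congr 1
    rw [hu, hu', ← _root_.map_mul, ← _root_.map_mul, hspec, Unitary.conjStarAlgAut_apply]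
  have key : A.charpoly = D.charpoly := by
    rw [Matrix.charpoly, Matrix.charpoly, hcm, Matrix.det_mul, Matrix.det_mul]
    calc u.det * (charmatrix D).det * u'.det = (charmatrix D).det * (u.det * u'.det) := by ring
      _ = (charmatrix D).det := by rw [← Matrix.det_mul, h1, Matrix.det_one, mul_one]
  rw [key, hD]
  have : (RCLike.ofReal ∘ hA.eigenvalues : V → ℝ) = hA.eigenvalues := by
    funext i; simp [RCLike.ofReal]
  rw [this, charpoly_diagonal']

private lemma eigen_dot (A : Matrix V V ℝ) (hA : A.IsHermitian) (i j : V) :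
    (⇑(hA.eigenvectorBasis i) : V → ℝ) ⬝ᵥ ⇑(hA.eigenvectorBasis j)
      = if i = j then (1:ℝ) else 0 := by
  have h := orthonormal_iff_ite.mp hA.eigenvectorBasis.orthonormal i j
  rw [PiLp.inner_apply] at h
  simpa [RCLike.inner_apply, starRingEnd_apply, dotProduct, mul_comm] using h

end Helpers

section CountLemmas
open Matrix Finset

private lemma map_XsubC {α : Type*} [Fintype α] (f : α → ℝ) :
    (Finset.univ : Finset α).val.map (fun i => (X:ℝ[X]) - C (f i))
      = ((Finset.univ : Finset α).val.map f).map (fun a => (X:ℝ[X]) - C a) := by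
  rw [Multiset.map_map]; rfl

private lemma card_filter_eq_countP {α : Type*} [Fintype α] (p : ℝ → Prop) (f : α → ℝ) :
    (Finset.univ.filter (fun i => p (f i))).card
      = Multiset.countP p ((Finset.univ : Finset α).val.map f) := by
  rw [Multiset.countP_map]
  rfl

private lemma count_transfer {V : Type*} [Fintype V] {n : ℕ} (μ : Fin n → ℝ) (ν : V → ℝ)
    (h : ∏ i, ((X:ℝ[X]) - C (μ i)) = ∏ i, ((X:ℝ[X]) - C (ν i))) (p : ℝ → Prop) :
    (Finset.univ.filter (fun i => p (μ i))).card
      = (Finset.univ.filter (fun i => p (ν i))).card := by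
  have h1 : ((Finset.univ : Finset (Fin n)).val.map μ)
      = ((Finset.univ : Finset V).val.map ν) := by
    have := congrArg Polynomial.roots (h)
    rwa [Finset.prod, Finset.prod, map_XsubC μ, map_XsubC ν,
      Polynomial.roots_multiset_prod_X_sub_C,
      Polynomial.roots_multiset_prod_X_sub_C] at this
  rw [card_filter_eq_countP p μ, card_filter_eq_countP p ν, h1]

variable {V : Type*} [Fintype V] [DecidableEq V] {m : ℕ}

private lemma matching_involution (T : SimpleGraph V) (M : T.Subgraph)
    (hM : M.IsPerfectMatching) :
    ∃ f : V → V, Function.Involutive f ∧ (∀ v, T.Adj v (f v)) ∧ (∀ v, M.Adj v (f v)) := by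
  have h := SimpleGraph.Subgraph.isPerfectMatching_iff.mp hM
  choose f hf huniq using h
  refine ⟨f, ?_, fun v => (hf v).adj_sub, hf⟩
  intro v
  exact (huniq (f v) v (hf v).symm).symm

private lemma card_lt_pairs (e : V ≃ Fin m) (f : V → V) (hf : Function.Involutive f)
    (hne : ∀ v, f v ≠ v) :
    2 * (Finset.univ.filter (fun i : V => e i < e (f i))).card = Fintype.card V := by
  have hcard := Finset.card_filter_add_card_filter_not
    (s := (Finset.univ : Finset V)) (p := fun i => e i < e (f i))
  have hswap : (Finset.univ.filter (fun i : V => ¬ e i < e (f i)))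
      = (Finset.univ.filter (fun i : V => e (f i) < e i)) := by
    ext i
    simp only [Finset.mem_filter, Finset.mem_univ, true_and]
    constructor
    · intro h
      rcases lt_or_eq_of_le (not_lt.mp h) with h' | h'
      · exact h'
      · exact absurd (e.injective h') (hne i)
    · intro h; exact not_lt.mpr h.le
  have hbij : (Finset.univ.filter (fun i : V => e i < e (f i))).card
      = (Finset.univ.filter (fun i : V => e (f i) < e i)).card := by
    apply Finset.card_nbij f
    · intro a ha
      simp only [Finset.coe_filter, Set.mem_setOf_eq, Finset.mem_univ, true_and] at *
      rwa [hf a]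
    · exact fun a _ b _ h => hf.injective h
    · intro b hb
      simp only [Finset.coe_filter, Set.mem_setOf_eq, Finset.mem_univ, true_and,
        Set.mem_image] at *
      exact ⟨f b, by rwa [hf b], hf b⟩
  rw [hswap, ← hbij, Finset.card_univ] at hcard
  omega

private lemma card_lt_adj_pairs (e : V ≃ Fin m) (T : SimpleGraph V) :
    (Finset.univ.filter (fun p : V × V => e p.1 < e p.2 ∧ T.Adj p.1 p.2)).card
      = T.edgeFinset.card := by
  apply Finset.card_nbij (fun p : V × V => Sym2.mk p.1 p.2)
  · intro p hp
    simp only [Finset.coe_filter, Set.mem_setOf_eq, Finset.mem_univ, true_and] at hp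
    simpa [SimpleGraph.mem_edgeFinset] using hp.2
  · intro p hp q hq h
    simp only [Finset.coe_filter, Set.mem_setOf_eq, Finset.mem_univ, true_and] at hp hq
    rcases Sym2.mk_eq_mk_iff.mp h with h' | h'
    · exact h'
    · exfalso
      have h1 : p.1 = q.2 := congrArg Prod.fst h'
      have h2 : p.2 = q.1 := congrArg Prod.snd h'
      rw [h1, h2] at hp
      exact absurd (hp.1.trans hq.1) (lt_irrefl _)
  · intro s hs
    simp only [Finset.coe_filter, Set.mem_setOf_eq, Set.mem_image] at *
    have hs' : s ∈ T.edgeSet := by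
      simpa [SimpleGraph.mem_edgeFinset] using hs
    induction s with
    | _ u v =>
      have hadj : T.Adj u v := hs'
      rcases lt_trichotomy (e u) (e v) with h | h | h
      · exact ⟨(u, v), ⟨Finset.mem_univ _, h, hadj⟩, rfl⟩
      · exact absurd (e.injective h) hadj.ne
      · exact ⟨(v, u), ⟨Finset.mem_univ _, h, hadj.symm⟩, Sym2.eq_swap⟩

private lemma card_lt_adj_matched (e : V ≃ Fin m) (T : SimpleGraph V) (f : V → V)
    (hfa : ∀ v, T.Adj v (f v)) :
    (Finset.univ.filter (fun p : V × V => e p.1 < e p.2 ∧ T.Adj p.1 p.2 ∧ p.2 = f p.1)).card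
      = (Finset.univ.filter (fun i : V => e i < e (f i))).card := by
  symm
  apply Finset.card_nbij (fun i => (i, f i))
  · intro i hi
    simp only [Finset.coe_filter, Set.mem_setOf_eq, Finset.mem_univ, true_and] at hi ⊢
    exact ⟨hi, hfa i, trivial⟩
  · intro a _ b _ h
    exact congrArg Prod.fst h
  · intro p hp
    simp only [Finset.coe_filter, Set.mem_setOf_eq, Set.mem_image, Finset.mem_univ,
      true_and] at hp ⊢
    refine ⟨p.1, ?_, ?_⟩
    · rw [← hp.2.2]; exact hp.1
    · ext <;> simp [hp.2.2.symm]

private lemma card_lt_adj_unmatched (e : V ≃ Fin m) (T : SimpleGraph V) (f : V → V)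
    (hfa : ∀ v, T.Adj v (f v)) :
    (Finset.univ.filter (fun p : V × V => e p.1 < e p.2 ∧ T.Adj p.1 p.2 ∧ p.2 ≠ f p.1)).card
      + (Finset.univ.filter (fun i : V => e i < e (f i))).card = T.edgeFinset.card := by
  rw [← card_lt_adj_matched e T f hfa, ← card_lt_adj_pairs e T]
  rw [← Finset.card_union_of_disjoint]
  · congr 1
    ext p
    simp only [Finset.mem_union, Finset.mem_filter, Finset.mem_univ, true_and]
    by_cases h : p.2 = f p.1 <;> tauto
  · rw [Finset.disjoint_filter]
    intro p _ h1 h2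
    exact h1.2.2 h2.2.2

end CountLemmas

/-- If `T` is a tree on `n` vertices with a perfect matching, then `2` is a
Laplacian eigenvalue of `T`, and in the nonincreasing listing `μ` of the Laplacian
eigenvalues (with multiplicity), `μ_{n/2} = 2` (0-indexed: `μ (n/2 - 1) = 2`). -/
theorem tree_perfect_matching_lap_eigenvalue_two {n : ℕ} {V : Type*} [Fintype V] [DecidableEq V]
    (hn : Fintype.card V = n)
    (T : SimpleGraph V) (hT : T.IsTree)
    (M : T.Subgraph) (hM : M.IsPerfectMatching)
    (μ : Fin n → ℝ) (hμ : Antitone μ)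
    (hfac : (Matrix.charpoly (T.lapMatrix ℝ)) = ∏ i : Fin n, (X - C (μ i))) :
    (∃ i : Fin n, μ i = 2) ∧ ∀ i : Fin n, (i : ℕ) + 1 = n / 2 → μ i = 2 := by
  classical
  obtain ⟨f, hf, hfa, hfM⟩ := matching_involution T M hM
  have hne : ∀ v, f v ≠ v := fun v => (hfa v).ne'
  obtain ⟨e⟩ : Nonempty (V ≃ Fin n) := ⟨Fintype.equivFinOfCardEq hn⟩
  set L : Matrix V V ℝ := T.lapMatrix ℝ with hL
  have hherm : L.IsHermitian := (SimpleGraph.posSemidef_lapMatrix ℝ T).1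
  set ν : V → ℝ := hherm.eigenvalues with hν
  -- the two kernel conditions
  set κ1 := {p : V × V // e p.1 < e p.2 ∧ T.Adj p.1 p.2 ∧ p.2 ≠ f p.1} with hκ1
  set κ2 := {i : V // e i < e (f i)} with hκ2
  set Φ1 : (V → ℝ) →ₗ[ℝ] (κ1 → ℝ) :=
    { toFun := fun x q => x q.1.1 - x q.1.2
      map_add' := by intro a b; funext q; simp; ring
      map_smul' := by intro r a; funext q; simp; ring } with hΦ1
  set Φ2 : (V → ℝ) →ₗ[ℝ] (κ2 → ℝ) :=
    { toFun := fun x q => x q.1 + x (f q.1)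
      map_add' := by intro a b; funext q; simp; ring
      map_smul' := by intro r a; funext q; simp; ring } with hΦ2
  have hform1 : ∀ x : V → ℝ, Φ1 x = 0 →
      dotProduct x (L.mulVec x) ≤ 2 * dotProduct x x := by
    intro x hx
    have hxc : ∀ i j : V, T.Adj i j → j ≠ f i → x i = x j := by
      intro i j hadj hji
      rcases lt_trichotomy (e i) (e j) with h | h | h
      · have := congrFun hx ⟨(i, j), h, hadj, hji⟩
        simpa [hΦ1, sub_eq_zero] using this
      · exact congrArg x (e.injective h)
      · have hij : i ≠ f j := by
          intro hc
          exact hji (by rw [hc, hf j])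
        have h2 : x j - x i = 0 := congrFun hx ⟨(j, i), h, hadj.symm, hij⟩
        linarith
    rw [hL, lap_form T f hf hfa x]
    have hz : (∑ i, ∑ j, if T.Adj i j ∧ j ≠ f i then (x i - x j)^2 else 0) = 0 := by
      apply Finset.sum_eq_zero
      intro i _
      apply Finset.sum_eq_zero
      intro j _
      by_cases h : T.Adj i j ∧ j ≠ f i
      · rw [if_pos h, hxc i j h.1 h.2]; ring
      · simp [h]
    rw [hz]
    have hnn : (0:ℝ) ≤ ∑ i, (x i + x (f i))^2 :=
      Finset.sum_nonneg fun i _ => sq_nonneg _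
    linarith
  have hform2 : ∀ x : V → ℝ, Φ2 x = 0 →
      dotProduct x ((-L).mulVec x) ≤ (-2) * dotProduct x x := by
    intro x hx
    have hxc : ∀ i : V, x i + x (f i) = 0 := by
      intro i
      rcases lt_trichotomy (e i) (e (f i)) with h | h | h
      · exact congrFun hx ⟨i, h⟩
      · exact absurd (e.injective h) (Ne.symm (hne i))
      · have h' : e (f i) < e (f (f i)) := by rwa [hf i]
        have h2 : x (f i) + x (f (f i)) = 0 := congrFun hx ⟨f i, h'⟩
        rw [hf i] at h2
        linarith
    have hz : (∑ i, (x i + x (f i))^2) = 0 := by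
      apply Finset.sum_eq_zero
      intro i _
      rw [hxc i]; ring
    have hnn : (0:ℝ) ≤ ∑ i, ∑ j, if T.Adj i j ∧ j ≠ f i then (x i - x j)^2 else 0 :=
      Finset.sum_nonneg fun i _ => Finset.sum_nonneg fun j _ => by positivity
    have hquad : dotProduct x (L.mulVec x) ≥ 2 * dotProduct x x := by
      rw [hL, lap_form T f hf hfa x, hz]
      linarith
    rw [Matrix.neg_mulVec, dotProduct_neg]
    linarith
  -- apply quad_count
  have hcount1 : (Finset.univ.filter (fun i : V => 2 < ν i)).card ≤
      (Finset.univ.filter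
        (fun p : V × V => e p.1 < e p.2 ∧ T.Adj p.1 p.2 ∧ p.2 ≠ f p.1)).card := by
    have := quad_count L Φ1 2 hform1
      (ι := {i : V // 2 < ν i})
      (fun i => ⇑(hherm.eigenvectorBasis i.1)) (fun i => ν i.1)
      (fun i => hherm.mulVec_eigenvectorBasis i.1)
      (fun i j => by
        rw [eigen_dot L hherm i.1 j.1]
        by_cases h : i = j
        · simp [h]
        · have : i.1 ≠ j.1 := fun hc => h (Subtype.ext hc)
          simp [h, this])
      (fun i => i.2)
    rwa [Fintype.card_subtype, Fintype.card_subtype] at this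
  have hcount2 : (Finset.univ.filter (fun i : V => ν i < 2)).card ≤
      (Finset.univ.filter (fun i : V => e i < e (f i))).card := by
    have := quad_count (-L) Φ2 (-2) hform2
      (ι := {i : V // ν i < 2})
      (fun i => ⇑(hherm.eigenvectorBasis i.1)) (fun i => -(ν i.1))
      (fun i => by
        rw [Matrix.neg_mulVec, hherm.mulVec_eigenvectorBasis i.1, neg_smul])
      (fun i j => by
        rw [eigen_dot L hherm i.1 j.1]
        by_cases h : i = j
        · simp [h]
        · have : i.1 ≠ j.1 := fun hc => h (Subtype.ext hc)
          simp [h, this])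
      (fun i => by have := i.2; linarith)
    rwa [Fintype.card_subtype, Fintype.card_subtype] at this
  -- arithmetic
  set a := (Finset.univ.filter (fun i : V => e i < e (f i))).card with ha
  have h2a : 2 * a = n := by rw [ha, card_lt_pairs e f hf hne, hn]
  have hedges : T.edgeFinset.card + 1 = n := by rw [hT.card_edgeFinset, hn]
  have hunm := card_lt_adj_unmatched e T f hfa
  have hV : Nonempty V := hT.isConnected.nonempty
  have hn0 : 0 < n := by rw [← hn]; exact Fintype.card_pos
  have ha1 : 1 ≤ a := by omega
  -- transfer counts to μ
  have htrans := fun p => count_transfer μ ν (by rw [← hfac, hL, charpoly_hermitian L hherm]) p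
  have hμ1 : (Finset.univ.filter (fun i : Fin n => 2 < μ i)).card ≤ a - 1 := by
    rw [htrans (fun r => 2 < r)]
    omega
  have hμ2 : (Finset.univ.filter (fun i : Fin n => μ i < 2)).card ≤ a := by
    rw [htrans (fun r => r < 2)]
    omega
  have hmain : ∀ i : Fin n, (i : ℕ) + 1 = n / 2 → μ i = 2 := by
    intro i hi
    have hia : (i : ℕ) + 1 = a := by omega
    by_contra hne2
    rcases lt_or_gt_of_ne hne2 with hlt | hgt
    · -- μ i < 2 : all indices ≥ i are < 2
      have hsub : Finset.Ici i ⊆ Finset.univ.filter (fun j : Fin n => μ j < 2) := by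
        intro j hj
        rw [Finset.mem_Ici] at hj
        exact Finset.mem_filter.mpr ⟨Finset.mem_univ _, lt_of_le_of_lt (hμ hj) hlt⟩
      have := Finset.card_le_card hsub
      rw [Fin.card_Ici] at this
      omega
    · -- 2 < μ i : all indices ≤ i are > 2
      have hsub : Finset.Iic i ⊆ Finset.univ.filter (fun j : Fin n => 2 < μ j) := by
        intro j hj
        rw [Finset.mem_Iic] at hj
        exact Finset.mem_filter.mpr ⟨Finset.mem_univ _, lt_of_lt_of_le hgt (hμ hj)⟩
      have := Finset.card_le_card hsub
      rw [Fin.card_Iic] at this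
      omega
  refine ⟨?_, hmain⟩
  have hlt : a - 1 < n := by omega
  refine ⟨⟨a - 1, hlt⟩, hmain ⟨a - 1, hlt⟩ ?_⟩
  simp only [Fin.val_mk]
  omega
end

section
/- Let T be a tree with a perfect matching M. A nonzero vector X is an eigenvector of the Laplacian L(T) for the eigenvalue 2 if and only if X has exactly two distinct entries t and −t for some t ≠ 0, with x(u) = −x(v) for every matching edge uv ∈ M and x(u) = x(v) for every non-matching edge uv ∉ M. -/
open scoped Classical

namespace TreeEigAux

open SimpleGraph Finset

variable {V : Type*} [Fintype V] [DecidableEq V] {T : SimpleGraph V}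

lemma path_length_eq_dist (hT : T.IsTree) {u v : V} (p : T.Walk u v) (hp : p.IsPath) :
    p.length = T.dist u v := by
  obtain ⟨q, hq, hql⟩ := hT.isConnected.exists_path_of_dist u v
  obtain ⟨w, -, hw⟩ := hT.existsUnique_path u v
  rw [← hql, hw p hp, hw q hq]

lemma concat_isPath {u v w : V} {p : T.Walk u v} (hp : p.IsPath) (h : T.Adj v w)
    (hw : w ∉ p.support) : (p.concat h).IsPath := by
  rw [← Walk.isPath_reverse_iff, Walk.reverse_concat]
  exact (Walk.cons_isPath_iff _ _).2 ⟨hp.reverse, by simpa using hw⟩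

lemma adj_dist (hT : T.IsTree) (r : V) {u v : V} (h : T.Adj u v) :
    T.dist r v = T.dist r u + 1 ∨ T.dist r u = T.dist r v + 1 := by
  obtain ⟨p, hp, hpl⟩ := hT.isConnected.exists_path_of_dist r u
  by_cases hv : v ∈ p.support
  · right
    have h1 := path_length_eq_dist hT _ (hp.takeUntil hv)
    have h2 := path_length_eq_dist hT _ (hp.dropUntil hv)
    have h3 : (p.takeUntil v hv).length + (p.dropUntil v hv).length = p.length := by
      rw [← Walk.length_append, Walk.take_spec]
    have h4 : T.dist v u = 1 := SimpleGraph.dist_eq_one_iff_adj.2 h.symm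
    omega
  · left
    have := path_length_eq_dist hT (p.concat h) (concat_isPath hp h hv)
    rw [Walk.length_concat, hpl] at this
    omega

lemma parent_spec (hT : T.IsTree) (r : V) {v : V} (hv : v ≠ r) :
    ∃ p, (T.Adj v p ∧ T.dist r p + 1 = T.dist r v) ∧
      ∀ q, T.Adj v q → T.dist r q + 1 = T.dist r v → q = p := by
  obtain ⟨p0, hp0, hp0l⟩ := hT.isConnected.exists_path_of_dist v r
  cases p0 with
  | nil => exact absurd rfl hv
  | cons hadj q =>
    rename_i p
    have hq : q.IsPath := ((Walk.cons_isPath_iff _ _).1 hp0).1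
    have hql : q.length = T.dist r p := by
      rw [SimpleGraph.dist_comm]
      exact path_length_eq_dist hT q hq
    have hdl : T.dist r p + 1 = T.dist r v := by
      rw [← hql, SimpleGraph.dist_comm (u := r) (v := v), ← hp0l]
      simp [Walk.length_cons]
    refine ⟨p, ⟨hadj, hdl⟩, ?_⟩
    intro q1 hq1a hq1d
    -- uniqueness
    have key : ∀ w : V, T.Adj v w → T.dist r w + 1 = T.dist r v →
        ∃ (c : T.Walk r v) (cp : T.Walk r w) (hcw : T.Adj w v), c.IsPath ∧ c = cp.concat hcw := by
      intro w hw hwd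
      obtain ⟨cw, hcwp, hcwl⟩ := hT.isConnected.exists_path_of_dist r w
      have hvn : v ∉ cw.support := by
        intro hmem
        have h1 := path_length_eq_dist hT _ (hcwp.takeUntil hmem)
        have h2 := cw.length_takeUntil_le hmem
        omega
      exact ⟨cw.concat hw.symm, cw, hw.symm, concat_isPath hcwp hw.symm hvn, rfl⟩
    obtain ⟨c1, cp1, hc1w, hc1p, hc1e⟩ := key q1 hq1a hq1d
    obtain ⟨c2, cp2, hc2w, hc2p, hc2e⟩ := key p hadj hdl
    obtain ⟨w0, -, hw0⟩ := hT.existsUnique_path r v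
    have : c1 = c2 := by rw [hw0 c1 hc1p, hw0 c2 hc2p]
    rw [hc1e, hc2e] at this
    obtain ⟨hv', -⟩ := Walk.concat_inj this
    exact hv'

end TreeEigAux

namespace TreeEigAux
open SimpleGraph Finset

variable {V : Type*} [Fintype V] [DecidableEq V] {T : SimpleGraph V}

lemma key (hT : T.IsTree) (M : T.Subgraph) (hM : M.IsPerfectMatching) {X : V → ℝ}
    (hX : (T.lapMatrix ℝ).mulVec X = (2 : ℝ) • X) (r : V) :
    ∀ n : ℕ, ∀ v p : V, Fintype.card V ≤ T.dist r v + n →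
      T.Adj v p → T.dist r p + 1 = T.dist r v →
      X p = if M.Adj v p then -X v else X v := by
  intro n
  induction n with
  | zero =>
    intro v p hn hadj hdist
    exfalso
    obtain ⟨q, hq, hql⟩ := hT.isConnected.exists_path_of_dist r v
    have := hq.length_lt
    omega
  | succ n ih =>
    intro v p hn hadj hdist
    have hvr : v ≠ r := by
      intro h
      subst h
      simp [SimpleGraph.dist_self] at hdist
    have hchild : ∀ u, T.Adj v u → u ≠ p → T.dist r u = T.dist r v + 1 := by
      intro u hu hne
      rcases adj_dist hT r hu with h | h
      · exact h
      · exfalso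
        obtain ⟨p', -, hpu⟩ := parent_spec hT r hvr
        exact hne ((hpu u hu h.symm).trans (hpu p hadj hdist).symm)
    have hc : ∀ u ∈ T.neighborFinset v, u ≠ p →
        X u - X v = if M.Adj v u then -2 * X v else 0 := by
      intro u hu hne
      rw [mem_neighborFinset] at hu
      have hd := hchild u hu hne
      have hthis := ih u v (by omega) hu.symm (by omega)
      by_cases hm : M.Adj v u
      · rw [if_pos hm]
        rw [if_pos (M.adj_symm hm)] at hthis
        linarith
      · rw [if_neg hm]
        rw [if_neg (fun h => hm (M.adj_symm h))] at hthis
        rw [hthis]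
        ring
    have heq : (T.degree v : ℝ) * X v - ∑ u ∈ T.neighborFinset v, X u = 2 * X v := by
      have h0 := congrFun hX v
      rw [lapMatrix_mulVec_apply] at h0
      simpa using h0
    have hsum : ∑ u ∈ T.neighborFinset v, (X u - X v) = -2 * X v := by
      rw [Finset.sum_sub_distrib, Finset.sum_const, T.card_neighborFinset_eq_degree v,
        nsmul_eq_mul]
      linarith
    obtain ⟨m, hm, hmu⟩ := hM.1 (hM.2 v)
    have hpmem : p ∈ T.neighborFinset v := by rw [mem_neighborFinset]; exact hadj
    by_cases hmp : M.Adj v p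
    · have hz : ∀ u ∈ T.neighborFinset v, u ≠ p → X u - X v = 0 := by
        intro u hu hne
        rw [hc u hu hne, if_neg]
        intro h
        exact hne ((hmu u h).trans (hmu p hmp).symm)
      rw [Finset.sum_eq_single_of_mem p hpmem hz] at hsum
      rw [if_pos hmp]
      linarith
    · have hmT : m ∈ T.neighborFinset v := by rw [mem_neighborFinset]; exact hm.adj_sub
      have hmne : m ≠ p := fun h => hmp (h ▸ hm)
      have hz : ∀ u ∈ T.neighborFinset v, u ≠ p ∧ u ≠ m → X u - X v = 0 := by
        intro u hu ⟨h1, h2⟩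
        rw [hc u hu h1, if_neg]
        intro h
        exact h2 (hmu u h)
      rw [Finset.sum_eq_add_of_mem p m hpmem hmT hmne.symm hz, hc m hmT hmne,
        if_pos hm] at hsum
      rw [if_neg hmp]
      linarith

end TreeEigAux

namespace TreeEigAux
open SimpleGraph Finset

variable {V : Type*} [Fintype V] [DecidableEq V] {T : SimpleGraph V}

lemma edge_rel (hT : T.IsTree) (M : T.Subgraph) (hM : M.IsPerfectMatching) {X : V → ℝ}
    (hX : (T.lapMatrix ℝ).mulVec X = (2 : ℝ) • X) {u v : V} (h : T.Adj u v) :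
    X u = if M.Adj u v then -X v else X v := by
  have h1 : T.dist u u + 1 = T.dist u v := by
    rw [SimpleGraph.dist_self, SimpleGraph.dist_eq_one_iff_adj.2 h]
  have h2 := key hT M hM hX u (Fintype.card V) v u (Nat.le_add_left _ _) h.symm h1
  by_cases hm : M.Adj u v
  · rw [if_pos (M.adj_symm hm)] at h2
    rwa [if_pos hm]
  · rw [if_neg (fun hh => hm (M.adj_symm hh))] at h2
    rwa [if_neg hm]

lemma values (hT : T.IsTree) (M : T.Subgraph) (hM : M.IsPerfectMatching) {X : V → ℝ}
    (hX : (T.lapMatrix ℝ).mulVec X = (2 : ℝ) • X) (r : V) :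
    ∀ n : ℕ, ∀ v : V, T.dist r v = n → X v = X r ∨ X v = -X r := by
  intro n
  induction n using Nat.strong_induction_on with
  | _ n ih =>
    intro v hv
    rcases eq_or_ne v r with rfl | hne
    · exact Or.inl rfl
    · obtain ⟨p, ⟨hadj, hdist⟩, -⟩ := parent_spec hT r hne
      have h1 := edge_rel hT M hM hX hadj
      have h2 := ih (T.dist r p) (by omega) p rfl
      by_cases hm : M.Adj v p
      · rw [if_pos hm] at h1
        rcases h2 with h | h
        · right; rw [h1, h]
        · left; rw [h1, h, neg_neg]
      · rw [if_neg hm] at h1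
        rcases h2 with h | h
        · left; rw [h1, h]
        · right; rw [h1, h]

end TreeEigAux


open SimpleGraph Finset TreeEigAux

/-- For a tree `T` with perfect matching `M`, a nonzero vector `X` is an
eigenvector of `L(T)` for the eigenvalue `2` iff `X` takes exactly the two values `t` and `-t`
for some `t ≠ 0`, with `X u = -X v` on matching edges and `X u = X v` on non-matching edges. -/
theorem tree_perfect_matching_eigenvector_two_characterization
    {V : Type*} [Fintype V] [DecidableEq V]
    (T : SimpleGraph V) (hT : T.IsTree)
    (M : T.Subgraph) (hM : M.IsPerfectMatching) (X : V → ℝ) :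
    (X ≠ 0 ∧ (T.lapMatrix ℝ).mulVec X = (2 : ℝ) • X) ↔
      ∃ t : ℝ, t ≠ 0 ∧ (∀ v : V, X v = t ∨ X v = -t) ∧
        (∀ u v : V, M.Adj u v → X u = -X v) ∧
        (∀ u v : V, T.Adj u v → ¬ M.Adj u v → X u = X v) := by
  have hne : Nonempty V := hT.isConnected.nonempty
  constructor
  · rintro ⟨hX0, hX⟩
    obtain ⟨r⟩ := hne
    have hvals : ∀ v : V, X v = X r ∨ X v = -X r :=
      fun v => values hT M hM hX r (T.dist r v) v rfl
    have ht0 : X r ≠ 0 := by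
      intro h
      apply hX0
      funext v
      rcases hvals v with hv | hv <;> simp [hv, h]
    refine ⟨X r, ht0, hvals, ?_, ?_⟩
    · intro u v huv
      have h1 := edge_rel hT M hM hX huv.adj_sub
      rwa [if_pos huv] at h1
    · intro u v huv hnm
      have h1 := edge_rel hT M hM hX huv
      rwa [if_neg hnm] at h1
  · rintro ⟨t, ht0, hval, hmatch, hnon⟩
    constructor
    · obtain ⟨v⟩ := hne
      intro h
      have h0 : X v = 0 := by rw [h]; rfl
      rcases hval v with hv | hv <;> rw [h0] at hv
      · exact ht0 hv.symm
      · exact ht0 (by linarith)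
    · funext v
      rw [lapMatrix_mulVec_apply, Pi.smul_apply, smul_eq_mul]
      obtain ⟨m, hm, hmu⟩ := hM.1 (hM.2 v)
      have hXm : X m = -X v := by
        have := hmatch v m hm
        linarith
      have hmT : m ∈ T.neighborFinset v := by rw [mem_neighborFinset]; exact hm.adj_sub
      have hz : ∀ u ∈ T.neighborFinset v, u ≠ m → X u - X v = 0 := by
        intro u hu hne
        rw [mem_neighborFinset] at hu
        have hnadj : ¬ M.Adj v u := fun h => hne (hmu u h)
        have := hnon v u hu hnadj
        linarith
      have hsum := Finset.sum_eq_single_of_mem m hmT hz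
      have hids : ∑ u ∈ T.neighborFinset v, (X u - X v)
          = (∑ u ∈ T.neighborFinset v, X u) - (T.degree v : ℝ) * X v := by
        rw [Finset.sum_sub_distrib, Finset.sum_const, T.card_neighborFinset_eq_degree v,
          nsmul_eq_mul]
      linarith
end

section
/- Let G be a broken sun graph containing a perfect matching such that 2 is an eigenvalue of L(G). Then there exists an eigenvector X of L(G) corresponding to the eigenvalue 2 all of whose entries lie in {−r, r} for some real number r > 0. -/
open scoped Classical

/-- A broken sun graph: a cycle `c 0, …, c (g-1)` (g ≥ 3) together with pendant vertices,
each attached to a cycle vertex, with at most one pendant per cycle vertex. -/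
def SimpleGraph.IsBrokenSun {V : Type*} (G : SimpleGraph V) : Prop :=
  ∃ (g : ℕ) (hg : 3 ≤ g) (c : Fin g → V), Function.Injective c ∧
    (∀ i j : Fin g, G.Adj (c i) (c j) ↔ (j = i + (⟨1, by omega⟩ : Fin g) ∨ i = j + (⟨1, by omega⟩ : Fin g))) ∧
    (∀ v : V, v ∉ Set.range c → ∃! w : V, G.Adj v w) ∧
    (∀ v : V, v ∉ Set.range c → ∀ w : V, G.Adj v w → w ∈ Set.range c) ∧
    (∀ i : Fin g, ∀ v w : V, v ∉ Set.range c → w ∉ Set.range c →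
      G.Adj v (c i) → G.Adj w (c i) → v = w)

open Fin.CommRing

lemma negOnePowSum {a b : ℕ} (h : Odd (a + b)) : (-1:ℝ)^a + (-1:ℝ)^b = 0 := by
  rcases Nat.even_or_odd a with ha | ha
  · have hb : Odd b := by
      rw [Nat.odd_iff] at h ⊢; rw [Nat.even_iff] at ha; omega
    rw [ha.neg_one_pow, hb.neg_one_pow]; ring
  · have hb : Even b := by
      rw [Nat.odd_iff] at h ha; rw [Nat.even_iff]; omega
    rw [ha.neg_one_pow, hb.neg_one_pow]; ring

lemma signKey (n Mq : ℕ) (hn : n + 1 = 4 * Mq) (hM : 1 ≤ Mq) (i : Fin (n+1)) :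
    (-1:ℝ)^((i+1).val / 2) + (-1:ℝ)^((i-1).val / 2) = 0 := by
  have e1 : 1 % (n+1) = 1 := Nat.mod_eq_of_lt (by omega)
  have hv1 : (i+1).val = (i.val + 1) % (n+1) := by rw [Fin.val_add, Fin.val_one', e1]
  have hv2 : (i-1).val = (i.val + n) % (n+1) := by
    rw [Fin.sub_def]
    show (n + 1 - (1:Fin (n+1)).val + i.val) % (n+1) = _
    rw [Fin.val_one', e1]; congr 1; omega
  have hiv : i.val < n + 1 := i.isLt
  apply negOnePowSum
  rcases Nat.eq_or_lt_of_le (Nat.le_of_lt_succ hiv) with hlast | hlt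
  · -- i.val = n
    have h1 : (i.val + 1) % (n+1) = 0 := by rw [hlast]; simp
    have h2 : (i.val + n) % (n+1) = n - 1 := by
      rw [hlast]
      have : n + n = (n - 1) + (n+1) := by omega
      rw [this, Nat.add_mod_right, Nat.mod_eq_of_lt (by omega)]
    rw [hv1, hv2, h1, h2, Nat.odd_iff]; omega
  · rcases Nat.eq_zero_or_pos i.val with h0 | hpos
    · have h1 : (i.val + 1) % (n+1) = 1 := by rw [h0, e1]
      have h2 : (i.val + n) % (n+1) = n := by rw [h0, Nat.zero_add, Nat.mod_eq_of_lt (by omega)]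
      rw [hv1, hv2, h1, h2, Nat.odd_iff]; omega
    · have h1 : (i.val + 1) % (n+1) = i.val + 1 := Nat.mod_eq_of_lt (by omega)
      have h2 : (i.val + n) % (n+1) = i.val - 1 := by
        have : i.val + n = (i.val - 1) + (n+1) := by omega
        rw [this, Nat.add_mod_right, Nat.mod_eq_of_lt (by omega)]
      rw [hv1, hv2, h1, h2, Nat.odd_iff]; omega


private theorem brokenSun_aux {V : Type*} [Fintype V] [DecidableEq V]
    (G : SimpleGraph V) (n : ℕ) (hg : 3 ≤ n + 1) (c : Fin (n+1) → V)
    (hinj : Function.Injective c)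
    (hadj : ∀ i j : Fin (n+1), G.Adj (c i) (c j) ↔ (j = i + 1 ∨ i = j + 1))
    (hpu : ∀ v : V, v ∉ Set.range c → ∃! w : V, G.Adj v w)
    (hpr : ∀ v : V, v ∉ Set.range c → ∀ w : V, G.Adj v w → w ∈ Set.range c)
    (hpa : ∀ i : Fin (n+1), ∀ v w : V, v ∉ Set.range c → w ∉ Set.range c →
      G.Adj v (c i) → G.Adj w (c i) → v = w)
    (M : G.Subgraph) (hM : M.IsPerfectMatching)
    (Y : V → ℝ) (hY0 : Y ≠ 0) (hY : (G.lapMatrix ℝ).mulVec Y = (2 : ℝ) • Y) :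
    ∃ (r : ℝ), 0 < r ∧ ∃ X : V → ℝ, X ≠ 0 ∧
      (G.lapMatrix ℝ).mulVec X = (2 : ℝ) • X ∧ ∀ v : V, X v = r ∨ X v = -r := by
  -- basic Fin facts
  have htwo : (2 : Fin (n+1)) ≠ 0 := by
    intro hc
    have := congrArg Fin.val hc
    have h2 : ((2 : Fin (n+1)) : ℕ) = 2 % (n+1) := rfl
    have h0 : ((0 : Fin (n+1)) : ℕ) = 0 := rfl
    rw [h2, h0, Nat.mod_eq_of_lt (by omega)] at this
    omega
  have hpm : ∀ i : Fin (n+1), c (i+1) ≠ c (i-1) := by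
    intro i hc
    have h1 : i + 1 = i - 1 := hinj hc
    have h2 : i + 2 = i := by
      have := congrArg (· + 1) h1
      simpa [sub_add_cancel, add_assoc, one_add_one_eq_two] using this
    have : (2 : Fin (n+1)) = 0 := by
      have := h2
      nth_rewrite 2 [show i = i + 0 by ring] at this
      exact add_left_cancel this
    exact htwo this
  -- pendant predicate
  set pend : Fin (n+1) → Prop := fun i => ∃ v, v ∉ Set.range c ∧ G.Adj v (c i) with hpend_def
  -- neighborFinset computations
  have hNp : ∀ v : V, v ∉ Set.range c → ∀ w : V, G.Adj v w →
      G.neighborFinset v = {w} := by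
    intro v hv w hw
    ext u
    simp only [SimpleGraph.mem_neighborFinset, Finset.mem_singleton]
    exact ⟨fun h => (hpu v hv).unique h hw, fun h => h ▸ hw⟩
  have hNf : ∀ i : Fin (n+1), ¬ pend i →
      G.neighborFinset (c i) = {c (i+1), c (i-1)} := by
    intro i hi
    ext u
    simp only [SimpleGraph.mem_neighborFinset, Finset.mem_insert, Finset.mem_singleton]
    constructor
    · intro h
      by_cases hu : u ∈ Set.range c
      · obtain ⟨j, rfl⟩ := hu
        rcases (hadj i j).1 h with h1 | h1
        · left; rw [h1]
        · right; rw [h1]; congr 1; ring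
      · exact absurd ⟨u, hu, h.symm⟩ hi
    · rintro (rfl | rfl)
      · exact (hadj i _).2 (Or.inl rfl)
      · exact (hadj i _).2 (Or.inr (by ring))
  have hNpend : ∀ i : Fin (n+1), ∀ p : V, p ∉ Set.range c → G.Adj p (c i) →
      G.neighborFinset (c i) = {c (i+1), c (i-1), p} := by
    intro i p hpnr hpadj
    ext u
    simp only [SimpleGraph.mem_neighborFinset, Finset.mem_insert, Finset.mem_singleton]
    constructor
    · intro h
      by_cases hu : u ∈ Set.range c
      · obtain ⟨j, rfl⟩ := hu
        rcases (hadj i j).1 h with h1 | h1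
        · left; rw [h1]
        · right; left; rw [h1]; congr 1; ring
      · exact Or.inr (Or.inr (hpa i u p hu hpnr h.symm hpadj))
    · rintro (rfl | rfl | rfl)
      · exact (hadj i _).2 (Or.inl rfl)
      · exact (hadj i _).2 (Or.inr (by ring))
      · exact hpadj.symm
  -- eigen equation pointwise
  have hEig : ∀ v : V, (G.degree v : ℝ) * Y v - ∑ u ∈ G.neighborFinset v, Y u = 2 * Y v := by
    intro v
    have := congrFun hY v
    rw [SimpleGraph.lapMatrix_mulVec_apply] at this
    simpa using this
  set y : Fin (n+1) → ℝ := fun i => Y (c i) with hy_def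
  have E1 : ∀ v : V, v ∉ Set.range c → ∀ w : V, G.Adj v w → Y v = - Y w := by
    intro v hv w hw
    have h := hEig v
    rw [hNp v hv w hw] at h
    have hd : G.degree v = 1 := by rw [SimpleGraph.degree, hNp v hv w hw]; simp
    rw [hd] at h
    simp at h
    linarith
  have R3 : ∀ i : Fin (n+1), ¬ pend i → y (i+1) = - y (i-1) := by
    intro i hi
    have h := hEig (c i)
    rw [hNf i hi] at h
    have hd : G.degree (c i) = 2 := by
      rw [SimpleGraph.degree, hNf i hi, Finset.card_pair (hpm i)]
    rw [hd, Finset.sum_pair (hpm i)] at h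
    push_cast at h
    simp only [hy_def]
    linarith
  have R2 : ∀ i : Fin (n+1), ∀ p : V, p ∉ Set.range c → G.Adj p (c i) →
      y (i+1) + y (i-1) = 2 * y i := by
    intro i p hpnr hpadj
    have h := hEig (c i)
    have hp1 : c (i+1) ≠ p := fun hc => hpnr ⟨i+1, hc⟩
    have hp2 : c (i-1) ≠ p := fun hc => hpnr ⟨i-1, hc⟩
    rw [hNpend i p hpnr hpadj] at h
    have hd : G.degree (c i) = 3 := by
      rw [SimpleGraph.degree, hNpend i p hpnr hpadj]
      rw [Finset.card_insert_of_notMem (by simp [hpm i, hp1]),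
        Finset.card_insert_of_notMem (by simp [hp2]), Finset.card_singleton]
    have hsum : ∑ u ∈ ({c (i+1), c (i-1), p} : Finset V), Y u
        = Y (c (i+1)) + Y (c (i-1)) + Y p := by
      rw [Finset.sum_insert (by simp [hpm i, hp1]),
        Finset.sum_insert (by simp [hp2]), Finset.sum_singleton]
      ring
    rw [hd, hsum] at h
    have hYp : Y p = - Y (c i) := E1 p hpnr (c i) hpadj
    rw [hYp] at h
    push_cast at h
    simp only [hy_def]
    linarith
  -- matching lemmas
  have hM' : ∀ v : V, ∃! w : V, M.Adj v w := SimpleGraph.Subgraph.isPerfectMatching_iff.1 hM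
  have m2 : ∀ i : Fin (n+1), pend i → ∀ w : V, M.Adj (c i) w → w ∉ Set.range c := by
    intro i hi w hw
    obtain ⟨p, hpnr, hpadj⟩ := hi
    obtain ⟨w', hw', huniq⟩ := hM' p
    have hw'c : w' = c i := (hpu p hpnr).unique hw'.adj_sub hpadj
    have hMp : M.Adj (c i) p := (hw'c ▸ hw').symm
    have : w = p := (hM' (c i)).unique hw hMp
    rw [this]; exact hpnr
  have m3 : ∀ i : Fin (n+1), ¬ pend i → ¬ M.Adj (c i) (c (i-1)) → M.Adj (c i) (c (i+1)) := by
    intro i hi hni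
    obtain ⟨w, hw, _⟩ := hM' (c i)
    have hwr : w ∈ Set.range c := by
      by_contra hwn
      exact hi ⟨w, hwn, hw.adj_sub.symm⟩
    obtain ⟨j, rfl⟩ := hwr
    rcases (hadj i j).1 hw.adj_sub with h1 | h1
    · rwa [h1] at hw
    · exfalso; apply hni; rwa [show j = i - 1 by rw [h1]; ring] at hw
  have K1 : ∀ i : Fin (n+1), M.Adj (c i) (c (i+1)) → ¬ pend (i+1) := by
    intro i hm hp
    exact m2 (i+1) hp (c i) hm.symm ⟨i, rfl⟩
  have K2 : ∀ i : Fin (n+1), M.Adj (c i) (c (i+1)) → ¬ M.Adj (c (i+1+1)) (c (i+1)) := by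
    intro i hm hc
    have : c (i+1+1) = c i := (hM' (c (i+1))).unique hc.symm hm.symm
    have h2 : i + 1 + 1 = i := hinj this
    apply htwo
    have h3 : i + 2 = i + 0 := by
      rw [add_zero]
      calc i + 2 = i + 1 + 1 := by ring
        _ = i := h2
    exact add_left_cancel h3
  by_cases hA : ∃ i₀ : Fin (n+1), pend i₀
  · -- Regime A: some cycle vertex has a pendant
    obtain ⟨i₀, hp₀⟩ := hA
    set pos : ℕ → Fin (n+1) := fun t => i₀ + (t : Fin (n+1)) with hpos_def
    have pos0 : pos 0 = i₀ := by simp [hpos_def]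
    have posSucc : ∀ t : ℕ, pos (t+1) = pos t + 1 := by
      intro t; simp only [hpos_def]; push_cast; ring
    have posG : pos (n+1) = i₀ := by
      simp only [hpos_def, Fin.natCast_self, add_zero]
    set D : ℕ → ℝ := fun t => y (pos t) - y (pos t - 1) with hD_def
    set S : ℕ → ℝ := fun t => y (pos t) + y (pos t - 1) with hS_def
    -- local recurrences
    have shear : ∀ t : ℕ, pend (pos t) → D (t+1) = D t ∧ S (t+1) = S t + 2 * D t := by
      intro t hp
      obtain ⟨p, hpnr, hpadj⟩ := hp
      have h2 := R2 (pos t) p hpnr hpadj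
      have e1 : pos (t+1) = pos t + 1 := posSucc t
      have e2 : pos (t+1) - 1 = pos t := by rw [e1]; ring
      constructor
      · simp only [hD_def, e1, add_sub_cancel_right]; linarith
      · simp only [hS_def, hD_def, e1, add_sub_cancel_right]; linarith
    have pair : ∀ t : ℕ, ¬ pend (pos t) → ¬ pend (pos t + 1) →
        D (t+2) = - D t ∧ S (t+2) = - S t := by
      intro t hp hp2
      have h1 := R3 (pos t) hp
      have h2 := R3 (pos t + 1) hp2
      have e0 : pos t + 1 - 1 = pos t := by ring
      rw [e0] at h2
      have e1 : pos (t+2) = pos t + 1 + 1 := by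
        rw [show t + 2 = t + 1 + 1 from rfl, posSucc, posSucc]
      have e2 : pos (t+2) - 1 = pos t + 1 := by rw [e1]; ring
      constructor
      · simp only [hD_def, e1, add_sub_cancel_right]; rw [h2, h1]; ring
      · simp only [hS_def, hD_def, e1, add_sub_cancel_right]; rw [h2, h1]; ring
    -- the walk
    set f : ℕ → ℕ := fun k => Nat.rec 0 (fun _ ih => ih + if pend (pos ih) then 1 else 2) k
      with hf_def
    have hf0 : f 0 = 0 := rfl
    have hfS : ∀ k, f (k+1) = f k + if pend (pos (f k)) then 1 else 2 := fun k => rfl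
    have hmono : ∀ k, f k < f (k+1) := by
      intro k; rw [hfS]; split <;> omega
    have hge : ∀ k, k ≤ f k := by
      intro k; induction k with
      | zero => simp [hf0]
      | succ k ih => have := hmono k; omega
    set SR : ℕ → Prop := fun t => ∃ (ε : ℝ) (m : ℕ), (ε = 1 ∨ ε = -1) ∧ 1 ≤ m ∧
      D t = ε * D 0 ∧ S t = ε * (S 0 + 2 * m * D 0) with hSR_def
    have main : ∀ k, f k ≤ n + 1 →
        (¬ M.Adj (c (pos (f k))) (c (pos (f k) - 1)) ∧ (1 ≤ k → SR (f k))) := by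
      intro k
      induction k with
      | zero =>
        intro _
        rw [hf0, pos0]
        refine ⟨fun hMA => ?_, by omega⟩
        exact m2 i₀ hp₀ _ hMA ⟨i₀ - 1, rfl⟩
      | succ k ih =>
        intro h1
        have hlt : f k < f (k+1) := hmono k
        obtain ⟨hinv, hsr⟩ := ih (by omega)
        by_cases hp : pend (pos (f k))
        · have hstep : f (k+1) = f k + 1 := by rw [hfS, if_pos hp]
          obtain ⟨hD1, hS1⟩ := shear (f k) hp
          constructor
          · rw [hstep, posSucc]
            intro hMA
            rw [add_sub_cancel_right] at hMA
            exact m2 _ hp _ hMA.symm ⟨pos (f k) + 1, rfl⟩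
          · intro _
            rw [hstep]
            rcases Nat.eq_zero_or_pos k with hk0 | hk1
            · subst hk0
              rw [hf0] at hD1 hS1 ⊢
              exact ⟨1, 1, Or.inl rfl, le_refl 1, by rw [hD1]; ring,
                by rw [hS1]; push_cast; ring⟩
            · obtain ⟨ε, m, hε, hm, hDk, hSk⟩ := hsr hk1
              exact ⟨ε, m + 1, hε, by omega, by rw [hD1, hDk],
                by rw [hS1, hSk, hDk]; push_cast; ring⟩
        · -- pair step
          have hk1 : 1 ≤ k := by
            rcases Nat.eq_zero_or_pos k with hk0 | hk1
            · exfalso; apply hp; subst hk0; rw [hf0, pos0]; exact hp₀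
            · exact hk1
          have hstep : f (k+1) = f k + 2 := by rw [hfS, if_neg hp]
          have hmatch : M.Adj (c (pos (f k))) (c (pos (f k) + 1)) := m3 _ hp hinv
          have hp2 : ¬ pend (pos (f k) + 1) := K1 _ hmatch
          obtain ⟨hD2, hS2⟩ := pair (f k) hp hp2
          constructor
          · rw [hstep]
            have e1 : pos (f k + 2) = pos (f k) + 1 + 1 := by
              rw [show f k + 2 = f k + 1 + 1 from rfl, posSucc, posSucc]
            rw [e1, add_sub_cancel_right]
            exact K2 _ hmatch
          · intro _
            rw [hstep]
            obtain ⟨ε, m, hε, hm, hDk, hSk⟩ := hsr hk1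
            refine ⟨-ε, m, ?_, hm, by rw [hD2, hDk]; ring, by rw [hS2, hSk]; ring⟩
            rcases hε with h | h
            · exact Or.inr (by rw [h])
            · exact Or.inl (by rw [h]; ring)
    -- termination of the walk at exactly n+1
    have hex : ∃ k, n + 1 ≤ f k := ⟨n + 1, hge _⟩
    set k₀ := Nat.find hex with hk₀_def
    have hk₀spec : n + 1 ≤ f k₀ := Nat.find_spec hex
    have hk₀min : ∀ k, k < k₀ → f k < n + 1 := by
      intro k hk
      have := Nat.find_min hex hk
      omega
    have hk₀pos : 0 < k₀ := by
      rcases Nat.eq_zero_or_pos k₀ with h | h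
      · exfalso; rw [h] at hk₀spec; rw [hf0] at hk₀spec; omega
      · exact h
    have hKlt : f (k₀ - 1) < n + 1 := hk₀min _ (by omega)
    have hk₀succ : k₀ = (k₀ - 1) + 1 := by omega
    have hfk₀ : f k₀ = n + 1 := by
      by_cases hp : pend (pos (f (k₀ - 1)))
      · have : f k₀ = f (k₀ - 1) + 1 := by rw [hk₀succ, hfS, if_pos hp]; simp
        omega
      · have hstep : f k₀ = f (k₀ - 1) + 2 := by rw [hk₀succ, hfS, if_neg hp]; simp
        have hKn : f (k₀ - 1) = n - 1 ∨ f (k₀ - 1) = n := by omega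
        rcases hKn with hK | hK
        · omega
        · exfalso
          have hinv := (main (k₀ - 1) (by omega)).1
          have hmatch := m3 _ hp hinv
          have e1 : pos (f (k₀ - 1)) + 1 = i₀ := by
            rw [← posSucc, hK]
            exact posG
          rw [e1] at hmatch
          exact m2 i₀ hp₀ _ hmatch.symm ⟨pos (f (k₀ - 1)), rfl⟩
      
    -- D 0 = 0
    have hDg : D (n+1) = D 0 ∧ S (n+1) = S 0 := by
      have : pos (n+1) = pos 0 := by rw [posG, pos0]
      constructor <;> simp only [hD_def, hS_def, this]
    have hD0 : D 0 = 0 := by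
      obtain ⟨ε, m, hε, hm, hDk, hSk⟩ := (main k₀ (by omega)).2 (by omega)
      rw [hfk₀] at hDk hSk
      rw [hDg.1] at hDk
      rw [hDg.2] at hSk
      rcases hε with h | h
      · subst h
        have h2 : 2 * (m:ℝ) * D 0 = 0 := by linarith
        have hm' : (0:ℝ) < 2 * m := by positivity
        rcases mul_eq_zero.1 h2 with h3 | h3
        · exact absurd h3 (by positivity)
        · exact h3
      · subst h; linarith
    have hDall : ∀ k, f k ≤ n + 1 → D (f k) = 0 := by
      intro k hk
      rcases Nat.eq_zero_or_pos k with h | h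
      · subst h; rw [hf0]; exact hD0
      · obtain ⟨ε, m, _, _, hDk, _⟩ := (main k hk).2 h
        rw [hDk, hD0, mul_zero]
    -- pair-forward : boundaries with no pendant are matched forward
    have hPF : ∀ k, f k ≤ n + 1 → ¬ pend (pos (f k)) → ¬ pend (pos (f k) + 1) := by
      intro k hk hp
      exact K1 _ (m3 _ hp (main k hk).1)
    -- coverage of pendant vertices by walk boundaries
    have hcov : ∀ u : ℕ, u ≤ n → pend (pos u) → ∃ k, f k = u := by
      intro u hu hpu'
      have hex2 : ∃ k, u < f k := ⟨u + 1, lt_of_lt_of_le (by omega) (hge (u+1))⟩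
      set k₁ := Nat.find hex2 with hk₁_def
      have hk₁spec : u < f k₁ := Nat.find_spec hex2
      have hk₁pos : 0 < k₁ := by
        rcases Nat.eq_zero_or_pos k₁ with h | h
        · exfalso; rw [h, hf0] at hk₁spec; omega
        · exact h
      have hK : ¬ (u < f (k₁ - 1)) := Nat.find_min hex2 (by omega)
      push_neg at hK
      by_cases hKu : f (k₁ - 1) = u
      · exact ⟨k₁ - 1, hKu⟩
      · exfalso
        have hKlt' : f (k₁ - 1) < u := by omega
        have hk₁s : k₁ = (k₁ - 1) + 1 := by omega
        by_cases hp : pend (pos (f (k₁ - 1)))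
        · have : f k₁ = f (k₁ - 1) + 1 := by rw [hk₁s, hfS, if_pos hp]; simp
          omega
        · have hstep : f k₁ = f (k₁ - 1) + 2 := by rw [hk₁s, hfS, if_neg hp]; simp
          have hfK : f (k₁ - 1) = u - 1 := by omega
          have hnp2 := hPF (k₁ - 1) (by omega) hp
          apply hnp2
          have : pos (f (k₁ - 1)) + 1 = pos u := by
            rw [← posSucc, hfK, show u - 1 + 1 = u by omega]
          rwa [this]
    -- Fact A : at pendant vertices the eigenvector is locally constant
    have factA : ∀ j : Fin (n+1), pend j → y j = y (j - 1) ∧ y (j+1) = y j := by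
      intro j hj
      set u : ℕ := (j - i₀).val with hu_def
      have hu : pos u = j := by
        simp only [hpos_def, hu_def, Fin.cast_val_eq_self]
        ring
      have hun : u ≤ n := (by have := (j - i₀).isLt; omega : (j - i₀).val ≤ n)
      obtain ⟨k, hk⟩ := hcov u hun (by rwa [hu])
      have hDu : D u = 0 := by rw [← hk]; exact hDall k (by omega)
      have hfk1 : f (k+1) = u + 1 := by rw [hfS, hk, if_pos (by rwa [hu])]
      have hDu1 : D (u+1) = 0 := by rw [← hfk1]; exact hDall (k+1) (by omega)
      constructor
      · have : y (pos u) - y (pos u - 1) = 0 := hDu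
        rw [hu] at this; linarith
      · have : y (pos (u+1)) - y (pos (u+1) - 1) = 0 := hDu1
        rw [posSucc, hu, add_sub_cancel_right] at this
        linarith
    -- all cycle values have the same absolute value
    have habs : ∀ t : ℕ, t ≤ n + 1 → |y (pos t)| = |y i₀| := by
      intro t
      induction t using Nat.strong_induction_on with
      | _ t ih =>
        intro ht
        match t with
        | 0 => rw [pos0]
        | 1 =>
          rw [posSucc 0, pos0, (factA i₀ hp₀).2]
        | (t' + 2) =>
          by_cases hp : pend (pos (t' + 1))
          · have h1 := (factA _ hp).2
            rw [← posSucc] at h1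
            rw [h1]
            exact ih (t' + 1) (by omega) (by omega)
          · have h1 := R3 _ hp
            have e2 : pos (t' + 1) - 1 = pos t' := by rw [posSucc, add_sub_cancel_right]
            rw [← posSucc, e2] at h1
            rw [h1, abs_neg]
            exact ih t' (by omega) (by omega)
    have hally : ∀ j : Fin (n+1), |y j| = |y i₀| := by
      intro j
      have hu : pos ((j - i₀).val) = j := by
        simp only [hpos_def, Fin.cast_val_eq_self]; ring
      rw [← hu]
      exact habs _ (by have := (j - i₀).isLt; omega)
    have hYv : ∀ v : V, |Y v| = |y i₀| := by
      intro v
      by_cases hv : v ∈ Set.range c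
      · obtain ⟨j, rfl⟩ := hv; exact hally j
      · obtain ⟨w, hw, _⟩ := hpu v hv
        have h1 : Y v = - Y w := E1 v hv w hw
        obtain ⟨j, rfl⟩ := hpr v hv w hw
        rw [h1, abs_neg]
        exact hally j
    have hr : 0 < |y i₀| := by
      obtain ⟨v, hv⟩ := Function.ne_iff.mp hY0
      rw [← hYv v]
      exact abs_pos.mpr hv
    exact ⟨|y i₀|, hr, Y, hY0, hY, fun v => (abs_eq (abs_nonneg _)).mp (hYv v)⟩
  · -- Regime B: pure cycle
    push_neg at hA
    have hall : ∀ v : V, v ∈ Set.range c := by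
      intro v
      by_contra hv
      obtain ⟨w, hw, _⟩ := hpu v hv
      obtain ⟨i, rfl⟩ := hpr v hv w hw
      exact hA i ⟨v, hv, hw⟩
    have hstep2 : ∀ j : Fin (n+1), y (j + 2) = - y j := by
      intro j
      have h := R3 (j+1) (hA _)
      rw [add_sub_cancel_right] at h
      rw [show j + 2 = j + 1 + 1 by ring]
      exact h
    have hiter : ∀ (k : ℕ) (j : Fin (n+1)), y (j + ((2*k : ℕ) : Fin (n+1))) = (-1:ℝ)^k * y j := by
      intro k
      induction k with
      | zero => intro j; simp
      | succ k ih =>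
        intro j
        have e : ((2*(k+1) : ℕ) : Fin (n+1)) = ((2*k : ℕ) : Fin (n+1)) + 2 := by
          push_cast; ring
        rw [e, ← add_assoc, show j + ((2*k : ℕ) : Fin (n+1)) + 2
          = (j + ((2*k : ℕ) : Fin (n+1))) + 2 by ring, hstep2, ih j]
        ring
    have hcast : ∀ k : ℕ, 2 * k = n + 1 → ((2*k : ℕ) : Fin (n+1)) = 0 := by
      intro k hk; rw [hk, Fin.natCast_self]
    have hyne : ∃ j : Fin (n+1), y j ≠ 0 := by
      obtain ⟨v, hv⟩ := Function.ne_iff.mp hY0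
      obtain ⟨j, rfl⟩ := hall v
      exact ⟨j, hv⟩
    obtain ⟨j₀, hj₀⟩ := hyne
    have heven : ∀ k : ℕ, 2 * k = n + 1 → ¬ Odd k → True := fun _ _ _ => trivial
    -- n + 1 is divisible by 4
    have hmod : ∃ Mq : ℕ, n + 1 = 4 * Mq ∧ 1 ≤ Mq := by
      have hfull : ((2*(n+1) : ℕ) : Fin (n+1)) = 0 := by
        have h' : (2*(n+1) : ℕ) = (n+1) + (n+1) := by ring
        rw [h', Nat.cast_add, Fin.natCast_self, add_zero]
      have h1 := hiter (n+1) j₀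
      rw [hfull, add_zero] at h1
      have hev1 : Even (n+1) := by
        by_contra hodd
        rw [Nat.not_even_iff_odd] at hodd
        rw [hodd.neg_one_pow] at h1
        apply hj₀; linarith
      obtain ⟨m, hm⟩ := hev1
      have hm' : 2 * m = n + 1 := by omega
      have h2 := hiter m j₀
      rw [hcast m hm', add_zero] at h2
      have hev2 : Even m := by
        by_contra hodd
        rw [Nat.not_even_iff_odd] at hodd
        rw [hodd.neg_one_pow] at h2
        apply hj₀; linarith
      obtain ⟨mq, hmq⟩ := hev2
      exact ⟨mq, by omega, by omega⟩
    obtain ⟨Mq, hn4, hMq⟩ := hmod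
    -- construct the two-valued eigenvector
    have hbij : Function.Bijective c := ⟨hinj, fun v => hall v⟩
    set e : Fin (n+1) ≃ V := Equiv.ofBijective c hbij with he_def
    set X : V → ℝ := fun v => (-1:ℝ)^(((e.symm v) : Fin (n+1)).val / 2) with hX_def
    have hXc : ∀ i : Fin (n+1), X (c i) = (-1:ℝ)^(i.val / 2) := by
      intro i
      have : e.symm (c i) = i := by
        apply e.injective
        simp [he_def, Equiv.ofBijective_apply]
      simp only [hX_def, this]
    have hkey : ∀ i : Fin (n+1), X (c (i+1)) + X (c (i-1)) = 0 := by
      intro i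
      rw [hXc, hXc]
      exact signKey n Mq hn4 hMq i
    refine ⟨1, one_pos, X, ?_, ?_, ?_⟩
    · intro hc
      have h0 : X (c 0) = 0 := by rw [hc]; rfl
      rw [hXc] at h0
      norm_num at h0
    · funext v
      obtain ⟨i, rfl⟩ := hall v
      rw [SimpleGraph.lapMatrix_mulVec_apply, hNf i (hA i)]
      have hd : G.degree (c i) = 2 := by
        rw [SimpleGraph.degree, hNf i (hA i), Finset.card_pair (hpm i)]
      rw [hd, Finset.sum_pair (hpm i), Pi.smul_apply, smul_eq_mul]
      have := hkey i
      push_cast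
      linarith
    · intro v
      rcases Nat.even_or_odd (((e.symm v) : Fin (n+1)).val / 2) with h | h
      · left; simp only [hX_def]; exact h.neg_one_pow
      · right; simp only [hX_def]; rw [h.neg_one_pow]


/-- A broken sun graph with a perfect matching having Laplacian eigenvalue `2`
admits an eigenvector for `2` whose entries all lie in `{-r, r}` for some `r > 0`. -/
theorem brokenSun_eigenvector_two_two_values {V : Type*} [Fintype V] [DecidableEq V]
    (G : SimpleGraph V) (hbs : G.IsBrokenSun)
    (M : G.Subgraph) (hM : M.IsPerfectMatching)
    (h2 : ∃ Y : V → ℝ, Y ≠ 0 ∧ (G.lapMatrix ℝ).mulVec Y = (2 : ℝ) • Y) :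
    ∃ (r : ℝ), 0 < r ∧ ∃ X : V → ℝ, X ≠ 0 ∧
      (G.lapMatrix ℝ).mulVec X = (2 : ℝ) • X ∧ ∀ v : V, X v = r ∨ X v = -r := by
  obtain ⟨g, hg, c, hinj, hadj, hpu, hpr, hpa⟩ := hbs
  obtain ⟨Y, hY0, hY⟩ := h2
  obtain ⟨n, rfl⟩ : ∃ n, g = n + 1 := ⟨g - 1, by omega⟩
  have hone : (⟨1, by omega⟩ : Fin (n+1)) = 1 := by
    apply Fin.ext
    show 1 = (1 : Fin (n+1)).val
    rw [Fin.val_one', Nat.mod_eq_of_lt (by omega)]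
  rw [hone] at hadj
  exact brokenSun_aux G n hg c hinj hadj hpu hpr hpa M hM Y hY0 hY
end

section
/- Let G be a unicyclic graph containing a perfect matching such that 2 is an eigenvalue of L(G). Then there exists an eigenvector X of L(G) corresponding to the eigenvalue 2 all of whose entries lie in {−r, r} for some real number r > 0. -/
open scoped Classical

open Finset Matrix SimpleGraph

private lemma lap_apply'' {V : Type*} [Fintype V] [DecidableEq V] (G' : SimpleGraph V)
    [DecidableRel G'.Adj] (X : V → ℝ) (v : V) :
    (G'.lapMatrix ℝ *ᵥ X) v = ∑ u : V, if G'.Adj v u then (X v - X u) else 0 := by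
  rw [SimpleGraph.lapMatrix_mulVec_apply]
  have h1 : (G'.degree v : ℝ) * X v = ∑ u : V, if G'.Adj v u then X v else 0 := by
    rw [SimpleGraph.degree_eq_sum_if_adj (R := ℝ) G' v, Finset.sum_mul]
    apply Finset.sum_congr rfl
    intro u _
    by_cases h : G'.Adj v u <;> simp [h]
  have h2 : (∑ u ∈ G'.neighborFinset v, X u) = ∑ u : V, if G'.Adj v u then X u else 0 := by
    rw [SimpleGraph.neighborFinset_eq_filter, Finset.sum_filter]
  rw [h1, h2, ← Finset.sum_sub_distrib]
  apply Finset.sum_congr rfl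
  intro u _
  by_cases h : G'.Adj v u <;> simp [h]

private lemma const_on_reachable {V : Type*} {G' : SimpleGraph V} {f : V → ℝ}
    (h : ∀ u v, G'.Adj u v → f u = f v) {u v : V} (hr : G'.Reachable u v) : f u = f v := by
  obtain ⟨p⟩ := hr
  induction p with
  | nil => rfl
  | cons ha _ ih => exact (h _ _ ha).trans ih

/-- A unicyclic graph (connected with as many edges as vertices) containing a
perfect matching and having Laplacian eigenvalue `2` admits an eigenvector for `2` whose
entries all lie in `{-r, r}` for some `r > 0`. -/
theorem unicyclic_eigenvector_two_two_values {V : Type*} [Fintype V] [DecidableEq V]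
    (G : SimpleGraph V) (hconn : G.Connected)
    (huni : G.edgeFinset.card = Fintype.card V)
    (M : G.Subgraph) (hM : M.IsPerfectMatching)
    (h2 : ∃ Y : V → ℝ, Y ≠ 0 ∧ (G.lapMatrix ℝ).mulVec Y = (2 : ℝ) • Y) :
    ∃ (r : ℝ), 0 < r ∧ ∃ X : V → ℝ, X ≠ 0 ∧
      (G.lapMatrix ℝ).mulVec X = (2 : ℝ) • X ∧ ∀ v : V, X v = r ∨ X v = -r := by
  classical
  obtain ⟨Y, hYne, hYeig⟩ := h2
  -- the matching involution `m`
  have hex : ∀ v : V, ∃ w, M.Adj v w ∧ ∀ y, M.Adj v y → y = w :=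
    fun v => SimpleGraph.Subgraph.isPerfectMatching_iff.mp hM v
  choose m hm1 hm2 using hex
  have hmG : ∀ v, G.Adj v (m v) := fun v => M.adj_sub (hm1 v)
  have hminv : ∀ v, m (m v) = v := fun v => (hm2 (m v) v ((hm1 v).symm)).symm
  have hmne : ∀ v, m v ≠ v := fun v h => (G.loopless.irrefl v) (by
    have := hmG v; rwa [h] at this)
  have hminj : Function.Injective m := fun a b h => by
    rw [← hminv a, h, hminv b]
  -- the graph `H` of non-matching edges
  set H : SimpleGraph V := G.deleteEdges M.edgeSet with hH
  have hHadj : ∀ u v, H.Adj u v ↔ (G.Adj u v ∧ v ≠ m u) := by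
    intro u v
    rw [hH, SimpleGraph.deleteEdges_adj]
    constructor
    · rintro ⟨hg, hs⟩
      exact ⟨hg, fun hvm => hs (SimpleGraph.Subgraph.mem_edgeSet.mpr (hvm ▸ hm1 u))⟩
    · rintro ⟨hg, hv⟩
      exact ⟨hg, fun hs => hv (hm2 u v (SimpleGraph.Subgraph.mem_edgeSet.mp hs))⟩
  -- splitting the Laplacian sum into non-matching part and matching part
  have hsplit : ∀ (X : V → ℝ) (v : V),
      (∑ u : V, if G.Adj v u then (X v - X u) else 0)
      = (∑ u : V, if H.Adj v u then (X v - X u) else 0) + (X v - X (m v)) := by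
    intro X v
    have hpt : ∀ u : V, (if G.Adj v u then (X v - X u) else 0)
        = (if H.Adj v u then (X v - X u) else 0) + (if u = m v then (X v - X u) else 0) := by
      intro u
      by_cases hu : u = m v
      · subst hu
        have h1 : G.Adj v (m v) := hmG v
        have h2' : ¬ H.Adj v (m v) := fun hh => ((hHadj v (m v)).mp hh).2 rfl
        simp [h1, h2']
      · rw [if_neg hu, add_zero]
        by_cases hg : G.Adj v u
        · rw [if_pos hg, if_pos ((hHadj v u).mpr ⟨hg, hu⟩)]
        · rw [if_neg hg, if_neg (fun h => hg ((hHadj v u).mp h).1)]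
    rw [Finset.sum_congr rfl (fun u _ => hpt u), Finset.sum_add_distrib,
      Finset.sum_ite_eq' Finset.univ (m v) (fun u => X v - X u)]
    simp
  -- eigen-equation in summed form
  have heig : ∀ v, (∑ u : V, if G.Adj v u then (Y v - Y u) else 0) = 2 * Y v := by
    intro v
    have h := congrFun hYeig v
    rw [lap_apply''] at h
    simpa using h
  -- components
  set c : V → H.ConnectedComponent := H.connectedComponentMk with hc
  have hccAdj : ∀ u v, H.Adj u v → c u = c v :=
    fun u v h => SimpleGraph.ConnectedComponent.connectedComponentMk_eq_of_adj h
  have hcout : ∀ a : H.ConnectedComponent, c a.out = a := fun a => a.out_eq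
  have hrep : ∀ (X : V → ℝ), (∀ u v, H.Adj u v → X u = X v) → ∀ v, X ((c v).out) = X v := by
    intro X hX v
    have hr : H.Reachable ((c v).out) v :=
      SimpleGraph.ConnectedComponent.exact (hcout (c v))
    exact const_on_reachable hX hr
  by_cases hodd : ∀ χ : H.ConnectedComponent → ℝ, (∀ v, χ (c v) + χ (c (m v)) = 0) → χ = 0
  · -- CASE B : derive a contradiction from the eigenvector
    exfalso
    set t : V → ℝ := fun v => Y v + Y (m v) with ht
    have htm : ∀ v, t (m v) = t v := by
      intro v; simp only [ht, hminv v]; ring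
    have hE1 : ∀ v, (∑ u : V, if H.Adj v u then (Y v - Y u) else 0) = t v := by
      intro v
      have h := heig v
      rw [hsplit Y v] at h
      simp only [ht]
      linarith
    -- component sums of `t` vanish
    have hdag : ∀ a : H.ConnectedComponent,
        ∑ v ∈ Finset.univ.filter (fun v => c v = a), t v = 0 := by
      intro a
      have hswap : ∀ v u, (if (H.Adj v u ∧ c v = a ∧ c u = a) then (Y v - Y u) else 0)
          = -(if (H.Adj u v ∧ c u = a ∧ c v = a) then (Y u - Y v) else 0) := by
        intro v u
        by_cases h : H.Adj v u ∧ c v = a ∧ c u = a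
        · have h' : H.Adj u v ∧ c u = a ∧ c v = a := ⟨h.1.symm, h.2.2, h.2.1⟩
          rw [if_pos h, if_pos h']; ring
        · have h' : ¬ (H.Adj u v ∧ c u = a ∧ c v = a) := fun hh => h ⟨hh.1.symm, hh.2.2, hh.2.1⟩
          rw [if_neg h, if_neg h']; ring
      have hzero : (∑ v : V, ∑ u : V,
          if (H.Adj v u ∧ c v = a ∧ c u = a) then (Y v - Y u) else 0) = 0 := by
        have e1 : (∑ v : V, ∑ u : V,
            if (H.Adj v u ∧ c v = a ∧ c u = a) then (Y v - Y u) else 0)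
            = ∑ u : V, ∑ v : V,
            if (H.Adj v u ∧ c v = a ∧ c u = a) then (Y v - Y u) else 0 := Finset.sum_comm
        have e2 : (∑ u : V, ∑ v : V,
            if (H.Adj v u ∧ c v = a ∧ c u = a) then (Y v - Y u) else 0)
            = -(∑ u : V, ∑ v : V,
            if (H.Adj u v ∧ c u = a ∧ c v = a) then (Y u - Y v) else 0) := by
          rw [← Finset.sum_neg_distrib]
          apply Finset.sum_congr rfl
          intro u _
          rw [← Finset.sum_neg_distrib]
          exact Finset.sum_congr rfl (fun v _ => hswap v u)
        have : (∑ v : V, ∑ u : V,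
            if (H.Adj v u ∧ c v = a ∧ c u = a) then (Y v - Y u) else 0)
            = -(∑ v : V, ∑ u : V,
            if (H.Adj v u ∧ c v = a ∧ c u = a) then (Y v - Y u) else 0) := e1.trans e2
        linarith
      calc ∑ v ∈ Finset.univ.filter (fun v => c v = a), t v
          = ∑ v ∈ Finset.univ.filter (fun v => c v = a),
            ∑ u : V, if (H.Adj v u ∧ c v = a ∧ c u = a) then (Y v - Y u) else 0 := by
            apply Finset.sum_congr rfl
            intro v hv
            have hva : c v = a := (Finset.mem_filter.mp hv).2
            rw [← hE1 v]
            apply Finset.sum_congr rfl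
            intro u _
            by_cases h : H.Adj v u
            · have hua : c u = a := (hccAdj v u h).symm.trans hva
              simp [h, hva, hua]
            · simp [h]
        _ = ∑ v : V, ∑ u : V,
            if (H.Adj v u ∧ c v = a ∧ c u = a) then (Y v - Y u) else 0 := by
            apply Finset.sum_subset (Finset.filter_subset _ _)
            intro v _ hv
            have hva : ¬ (c v = a) := by
              intro h; exact hv (Finset.mem_filter.mpr ⟨Finset.mem_univ v, h⟩)
            apply Finset.sum_eq_zero
            intro u _
            rw [if_neg (fun hh => hva hh.2.1)]
        _ = 0 := hzero
    -- a set of representatives `Rf` of the matching pairs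
    have prsymm : ∀ {x y : V}, (y = x ∨ y = m x) → (x = y ∨ x = m y) := by
      rintro x y (rfl | rfl)
      · exact Or.inl rfl
      · exact Or.inr (hminv x).symm
    have prtrans : ∀ {x y z : V}, (y = x ∨ y = m x) → (z = y ∨ z = m y) → (z = x ∨ z = m x) := by
      rintro x y z (rfl | rfl) (rfl | rfl)
      · exact Or.inl rfl
      · exact Or.inr rfl
      · exact Or.inr rfl
      · exact Or.inl (hminv x)
    set pr : Setoid V := ⟨fun u v => v = u ∨ v = m u,
      ⟨fun x => Or.inl rfl, prsymm, prtrans⟩⟩ with hpr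
    set f : V → V := fun v => Quotient.out (Quotient.mk pr v) with hf
    have hfmem : ∀ v, f v = v ∨ f v = m v := by
      intro v
      have h : (Quotient.mk pr v).out = v ∨ (Quotient.mk pr v).out = m v := by
        have hrel : v = (Quotient.mk pr v).out ∨ v = m ((Quotient.mk pr v).out) :=
          Quotient.exact (Quotient.out_eq (Quotient.mk pr v))
        rcases hrel with h | h
        · exact Or.inl h.symm
        · right
          have h2 := congrArg m h
          rw [hminv] at h2
          exact h2.symm
      exact h
    have hff : ∀ v, f (m v) = f v := by
      intro v
      have hq : Quotient.mk pr v = Quotient.mk pr (m v) := Quotient.sound (Or.inr rfl)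
      simp only [hf, hq]
    set Rf : Finset V := Finset.univ.filter (fun v => f v = v) with hRf
    have hmemR : ∀ v, v ∈ Rf ↔ f v = v := by
      intro v; simp [hRf]
    have hRnot : ∀ v, v ∈ Rf → m v ∉ Rf := by
      intro v hv hmv
      rw [hmemR] at hv hmv
      exact hmne v (by rw [← hmv, hff v, hv])
    have hRor : ∀ v, v ∈ Rf ∨ m v ∈ Rf := by
      intro v
      rcases hfmem v with h | h
      · exact Or.inl ((hmemR v).mpr h)
      · right
        rw [hmemR, hff v, h]
    -- summing over the pairs
    have hRsplit : ∀ g : V → ℝ, (∑ v : V, g v) = ∑ r ∈ Rf, (g r + g (m r)) := by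
      intro g
      have hdisj : Disjoint Rf (Rf.image m) := by
        rw [Finset.disjoint_left]
        intro a ha hmem
        obtain ⟨b, hb, hba⟩ := Finset.mem_image.mp hmem
        exact hRnot b hb (hba ▸ ha)
      have hunion : Rf ∪ Rf.image m = Finset.univ := by
        apply Finset.eq_univ_of_forall
        intro v
        rcases hRor v with h | h
        · exact Finset.mem_union_left _ h
        · apply Finset.mem_union_right
          exact Finset.mem_image.mpr ⟨m v, h, hminv v⟩
      calc ∑ v : V, g v = ∑ v ∈ Rf ∪ Rf.image m, g v := by rw [hunion]
        _ = (∑ v ∈ Rf, g v) + ∑ v ∈ Rf.image m, g v := Finset.sum_union hdisj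
        _ = (∑ v ∈ Rf, g v) + ∑ v ∈ Rf, g (m v) := by
            rw [Finset.sum_image (fun a _ b _ h => hminj h)]
        _ = ∑ r ∈ Rf, (g r + g (m r)) := Finset.sum_add_distrib.symm
    have hcardV : Fintype.card V = 2 * Rf.card := by
      have hdisj : Disjoint Rf (Rf.image m) := by
        rw [Finset.disjoint_left]
        intro a ha hmem
        obtain ⟨b, hb, hba⟩ := Finset.mem_image.mp hmem
        exact hRnot b hb (hba ▸ ha)
      have hunion : Rf ∪ Rf.image m = Finset.univ := by
        apply Finset.eq_univ_of_forall
        intro v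
        rcases hRor v with h | h
        · exact Finset.mem_union_left _ h
        · apply Finset.mem_union_right
          exact Finset.mem_image.mpr ⟨m v, h, hminv v⟩
      have := Finset.card_union_of_disjoint hdisj
      rw [hunion, Finset.card_image_of_injective Rf hminj] at this
      rw [← Finset.card_univ, this]
      ring
    -- the incidence matrix of matching edges versus components
    set Bm : Matrix H.ConnectedComponent ↥Rf ℝ := fun a r =>
      (if c r.1 = a then 1 else 0) + (if c (m r.1) = a then 1 else 0) with hBm
    set sv : ↥Rf → ℝ := fun r => t r.1 with hsv
    have hBs : Bm *ᵥ sv = 0 := by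
      funext a
      show (∑ r : ↥Rf, Bm a r * sv r) = 0
      calc (∑ r : ↥Rf, Bm a r * sv r)
          = ∑ r : ↥Rf, ((if c r.1 = a then t r.1 else 0)
              + (if c (m r.1) = a then t (m r.1) else 0)) := by
            apply Finset.sum_congr rfl
            intro r _
            rw [hBm, hsv, htm r.1]
            by_cases h1 : c r.1 = a <;> by_cases h2 : c (m r.1) = a <;>
              simp [h1, h2] <;> ring
        _ = ∑ r ∈ Rf, ((if c r = a then t r else 0) + (if c (m r) = a then t (m r) else 0)) :=
            Finset.sum_coe_sort (s := Rf)
              (f := fun v => (if c v = a then t v else 0) + (if c (m v) = a then t (m v) else 0))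
        _ = ∑ v : V, (if c v = a then t v else 0) :=
            (hRsplit (fun v => if c v = a then t v else 0)).symm
        _ = ∑ v ∈ Finset.univ.filter (fun v => c v = a), t v := (Finset.sum_filter _ _).symm
        _ = 0 := hdag a
    -- the transposed incidence matrix is injective (uses `hodd`)
    have hkerT : LinearMap.ker (Bmᵀ.mulVecLin) = ⊥ := by
      rw [LinearMap.ker_eq_bot']
      intro x hx
      have hxr : ∀ r : ↥Rf, x (c r.1) + x (c (m r.1)) = 0 := by
        intro r
        have h := congrFun hx r
        rw [Matrix.mulVecLin_apply] at h
        have : (Bmᵀ *ᵥ x) r = x (c r.1) + x (c (m r.1)) := by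
          show (∑ a : H.ConnectedComponent, Bm a r * x a) = _
          simp only [Matrix.transpose_apply, hBm, add_mul, ite_mul, one_mul, zero_mul]
          rw [Finset.sum_add_distrib, Finset.sum_ite_eq Finset.univ (c r.1) x,
            Finset.sum_ite_eq Finset.univ (c (m r.1)) x]
          simp
        rw [this] at h
        exact h
      have hall : ∀ v : V, x (c v) + x (c (m v)) = 0 := by
        intro v
        rcases hRor v with hv | hv
        · exact hxr ⟨v, hv⟩
        · have h := hxr ⟨m v, hv⟩
          simp only [hminv v] at h
          linarith
      exact hodd x hall
    -- counting: `card K ≥ Rf.card` via the edge-difference map Φ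
    have hKcard : Rf.card ≤ Fintype.card H.ConnectedComponent := by
      set Φ : (V → ℝ) →ₗ[ℝ] (↥H.edgeFinset → ℝ) :=
        { toFun := fun X e => X (Quot.out e.1).1 - X (Quot.out e.1).2
          map_add' := by intro a b; funext e; simp [Pi.add_apply]; ring
          map_smul' := by intro r a; funext e; simp [Pi.smul_apply]; ring } with hΦ
      have hΦker1 : ∀ X : V → ℝ, Φ X = 0 → ∀ u v, H.Adj u v → X u = X v := by
        intro X hXk u v huv
        have hmem : s(u,v) ∈ H.edgeFinset := by
          rw [SimpleGraph.mem_edgeFinset, SimpleGraph.mem_edgeSet]; exact huv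
        have h0 := congrFun hXk ⟨s(u,v), hmem⟩
        simp only [hΦ, LinearMap.coe_mk, AddHom.coe_mk, Pi.zero_apply] at h0
        rcases hp : Quot.out (s(u,v)) with ⟨p1, p2⟩
        have hout := Quot.out_eq (s(u,v))
        rw [hp] at hout h0
        rcases Sym2.eq_iff.mp hout with ⟨h1, h2⟩ | ⟨h1, h2⟩
        · rw [← h1, ← h2]; simp at h0; linarith
        · rw [← h1, ← h2]; simp at h0; linarith
      have hΦker2 : ∀ χ0 : H.ConnectedComponent → ℝ, Φ (fun v => χ0 (c v)) = 0 := by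
        intro χ0
        funext e
        obtain ⟨e, he⟩ := e
        rcases hp : Quot.out e with ⟨p1, p2⟩
        have hout : s(p1, p2) = e := by have := Quot.out_eq e; rw [hp] at this; exact this
        have hadj : H.Adj p1 p2 := by
          rw [← SimpleGraph.mem_edgeSet, hout]
          exact SimpleGraph.mem_edgeFinset.mp he
        simp only [hΦ, LinearMap.coe_mk, AddHom.coe_mk, Pi.zero_apply, hp]
        rw [hccAdj _ _ hadj]
        ring
      set l1 : ↥(LinearMap.ker Φ) →ₗ[ℝ] (H.ConnectedComponent → ℝ) :=
        (LinearMap.funLeft ℝ ℝ (Quot.out)).comp (LinearMap.ker Φ).subtype with hl1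
      set l2 : (H.ConnectedComponent → ℝ) →ₗ[ℝ] ↥(LinearMap.ker Φ) :=
        LinearMap.codRestrict (LinearMap.ker Φ) (LinearMap.funLeft ℝ ℝ c)
          (fun χ0 => LinearMap.mem_ker.mpr (hΦker2 χ0)) with hl2
      have hl12 : l1.comp l2 = LinearMap.id := by
        apply LinearMap.ext
        intro χ0
        funext a
        simp only [hl1, hl2, LinearMap.comp_apply, LinearMap.funLeft_apply,
          LinearMap.codRestrict_apply, Submodule.coe_subtype, LinearMap.id_apply]
        exact congrArg χ0 (hcout a)
      have hl21 : l2.comp l1 = LinearMap.id := by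
        apply LinearMap.ext
        rintro ⟨X, hX⟩
        apply Subtype.ext
        funext v
        simp only [hl1, hl2, LinearMap.comp_apply, LinearMap.funLeft_apply,
          LinearMap.codRestrict_apply, Submodule.coe_subtype, LinearMap.id_apply]
        exact hrep X (hΦker1 X (LinearMap.mem_ker.mp hX)) v
      set eqv : ↥(LinearMap.ker Φ) ≃ₗ[ℝ] (H.ConnectedComponent → ℝ) := LinearEquiv.ofLinear l1 l2 hl12 hl21
      have hkerdim : Module.finrank ℝ ↥(LinearMap.ker Φ) = Fintype.card H.ConnectedComponent := by
        rw [eqv.finrank_eq, Module.finrank_fintype_fun_eq_card]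
      have hrn := LinearMap.finrank_range_add_finrank_ker Φ
      rw [Module.finrank_fintype_fun_eq_card, hkerdim] at hrn
      have hrange : Module.finrank ℝ ↥(LinearMap.range Φ) ≤ Fintype.card ↥H.edgeFinset := by
        have h := Submodule.finrank_le (LinearMap.range Φ)
        rwa [Module.finrank_fintype_fun_eq_card] at h
      -- edge counts
      have hMcard : M.edgeSet.toFinset.card = Rf.card := by
        symm
        apply Finset.card_bij (fun (r : V) (_ : r ∈ Rf) => s(r, m r))
        · intro r _
          rw [Set.mem_toFinset, SimpleGraph.Subgraph.mem_edgeSet]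
          exact hm1 r
        · intro a1 ha1 a2 ha2 hval
          rcases Sym2.eq_iff.mp hval with ⟨h1, _⟩ | ⟨h1, h2⟩
          · exact h1
          · exfalso
            exact hRnot a2 ha2 (h1 ▸ ha1)
        · intro e he
          induction e with
          | _ u v =>
            rw [Set.mem_toFinset, SimpleGraph.Subgraph.mem_edgeSet] at he
            have hvm : v = m u := hm2 u v he
            rcases hRor u with hu | hu
            · exact ⟨u, hu, by rw [hvm]⟩
            · refine ⟨m u, hu, ?_⟩
              rw [hminv u, hvm]
              exact Sym2.eq_swap
      have hsub : M.edgeSet.toFinset ⊆ G.edgeFinset := by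
        intro e he
        rw [Set.mem_toFinset] at he
        rw [SimpleGraph.mem_edgeFinset]
        exact M.edgeSet_subset he
      have hHedge : H.edgeFinset = G.edgeFinset \ M.edgeSet.toFinset := by
        rw [SimpleGraph.edgeFinset, SimpleGraph.edgeFinset]
        rw [← Set.toFinset_diff]
        apply Set.toFinset_congr
        rw [hH]
        exact SimpleGraph.edgeSet_deleteEdges M.edgeSet
      have hHcard : H.edgeFinset.card = Rf.card := by
        rw [hHedge, Finset.card_sdiff_of_subset hsub, huni, hMcard, hcardV]
        omega
      have hcardE : Fintype.card ↥H.edgeFinset = Rf.card := by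
        rw [Fintype.card_coe, hHcard]
      rw [hcardE] at hrange
      omega
    -- conclude `sv = 0` by rank counting
    have hrankT : Bmᵀ.rank = Fintype.card H.ConnectedComponent := by
      have h1 := LinearMap.finrank_range_add_finrank_ker (Bmᵀ.mulVecLin)
      rw [hkerT, finrank_bot, Module.finrank_fintype_fun_eq_card] at h1
      rw [Matrix.rank]
      omega
    have hrank : Module.finrank ℝ ↥(LinearMap.range (Bm.mulVecLin)) = Fintype.card H.ConnectedComponent := by
      have := Matrix.rank_transpose Bm
      rw [hrankT] at this
      rw [← Matrix.rank]
      exact this.symm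
    have hkerB : LinearMap.ker (Bm.mulVecLin) = ⊥ := by
      have h1 := LinearMap.finrank_range_add_finrank_ker (Bm.mulVecLin)
      rw [Module.finrank_fintype_fun_eq_card, Fintype.card_coe, hrank] at h1
      have h0 : Module.finrank ℝ ↥(LinearMap.ker (Bm.mulVecLin)) = 0 := by omega
      exact Submodule.finrank_eq_zero.mp h0
    have hs0 : sv = 0 := by
      have hmem : sv ∈ LinearMap.ker (Bm.mulVecLin) := by
        rw [LinearMap.mem_ker, Matrix.mulVecLin_apply]
        exact hBs
      rw [hkerB, Submodule.mem_bot] at hmem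
      exact hmem
    have ht0 : ∀ v, t v = 0 := by
      intro v
      rcases hRor v with hv | hv
      · exact congrFun hs0 ⟨v, hv⟩
      · have h := congrFun hs0 ⟨m v, hv⟩
        have : t (m v) = 0 := h
        rwa [htm v] at this
    -- `Y` is harmonic on `H`, hence constant on components
    have hYH : ∀ u v, H.Adj u v → Y u = Y v := by
      have h0 : Matrix.toLin' (H.lapMatrix ℝ) Y = 0 := by
        rw [Matrix.toLin'_apply]
        funext v
        rw [lap_apply'']
        rw [hE1 v]
        exact ht0 v
      intro u v
      exact (SimpleGraph.lapMatrix_mulVec_eq_zero_iff_forall_adj (G := H) (x := Y)).mp h0 u v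
    set χ : H.ConnectedComponent → ℝ := fun a => Y a.out with hχ
    have hχc : ∀ v, χ (c v) = Y v := fun v => hrep Y hYH v
    have hχ0 : χ = 0 := by
      apply hodd χ
      intro v
      rw [hχc v, hχc (m v)]
      exact ht0 v
    apply hYne
    funext v
    rw [← hχc v, hχ0]
    rfl
  · -- CASE A : build the ±r eigenvector directly
    push_neg at hodd
    obtain ⟨χ, hχanti, hχne⟩ := hodd
    set Z : V → ℝ := fun v => χ (c v) with hZ
    have hZH : ∀ u v, H.Adj u v → Z u = Z v := fun u v h => congrArg χ (hccAdj u v h)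
    have hZm : ∀ v, Z (m v) = - Z v := by
      intro v
      have h := hχanti v
      simp only [hZ]
      linarith
    have hZne : Z ≠ 0 := by
      intro h0
      apply hχne
      funext a
      have h : Z a.out = 0 := by rw [h0]; rfl
      simp only [hZ] at h
      rwa [hcout a] at h
    obtain ⟨v0, hv0⟩ : ∃ v, Z v ≠ 0 := Function.ne_iff.mp hZne
    have habs : ∀ u v, G.Adj u v → |Z u| = |Z v| := by
      intro u v huv
      by_cases hv : v = m u
      · rw [hv, hZm u, abs_neg]
      · exact congrArg abs (hZH u v ((hHadj u v).mpr ⟨huv, hv⟩))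
    have hZconst : ∀ v, |Z v| = |Z v0| := by
      intro v
      exact const_on_reachable habs (hconn.preconnected v v0)
    refine ⟨|Z v0|, abs_pos.mpr hv0, Z, hZne, ?_, ?_⟩
    · funext v
      rw [show ((G.lapMatrix ℝ).mulVec Z) v = (G.lapMatrix ℝ *ᵥ Z) v from rfl, lap_apply'',
        hsplit Z v]
      have hzero : (∑ u : V, if H.Adj v u then (Z v - Z u) else 0) = 0 := by
        apply Finset.sum_eq_zero
        intro u _
        by_cases h : H.Adj v u
        · rw [if_pos h, hZH v u h]; ring
        · rw [if_neg h]
      rw [hzero, hZm v]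
      simp [Pi.smul_apply]
      ring
    · intro v
      have h := hZconst v
      rcases (abs_eq (abs_nonneg (Z v0))).mp h with h' | h'
      · exact Or.inl h'
      · exact Or.inr h'
end

section
/- Let G₁ and G₂ be Laplacian-eigenvalue-2 graphs with eigenvectors X and Y respectively (L(G₁)X = 2X, L(G₂)Y = 2Y), and let G = G₁ ⊙ G₂ be joined by an edge uv with u ∈ V(G₁), v ∈ V(G₂). If x(u) ≠ 0 and y(v) ≠ 0, then the vector Z defined by Z = X on V(G₁) and Z = (x(u)/y(v))·Y on V(G₂) satisfies L(G)Z = 2Z; in particular 2 is an eigenvalue of L(G). -/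
open scoped Classical

/-- The one-edge connection `G₁ ⊙ G₂`. -/
def oneEdgeConn {V₁ V₂ : Type*} (G₁ : SimpleGraph V₁) (G₂ : SimpleGraph V₂)
    (u : V₁) (v : V₂) : SimpleGraph (V₁ ⊕ V₂) :=
  SimpleGraph.fromRel (fun x y =>
    match x, y with
    | Sum.inl a, Sum.inl b => G₁.Adj a b
    | Sum.inr a, Sum.inr b => G₂.Adj a b
    | Sum.inl a, Sum.inr b => a = u ∧ b = v
    | Sum.inr _, Sum.inl _ => False)

lemma lap_mulVec_sum {V : Type*} [Fintype V] [DecidableEq V] (G : SimpleGraph V)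
    [DecidableRel G.Adj] (Z : V → ℝ) (w : V) :
    (G.lapMatrix ℝ).mulVec Z w = ∑ w', if G.Adj w w' then Z w - Z w' else 0 := by
  rw [SimpleGraph.lapMatrix_mulVec_apply]
  have h1 : (G.degree w : ℝ) * Z w = ∑ w', if G.Adj w w' then Z w else 0 := by
    rw [← Finset.sum_filter, ← SimpleGraph.neighborFinset_eq_filter, Finset.sum_const,
      nsmul_eq_mul, SimpleGraph.degree]
  have h2 : ∑ x ∈ G.neighborFinset w, Z x = ∑ w', if G.Adj w w' then Z w' else 0 := by
    rw [← Finset.sum_filter, ← SimpleGraph.neighborFinset_eq_filter]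
  rw [h1, h2, ← Finset.sum_sub_distrib]
  congr 1; ext w'; split <;> simp

lemma oneEdgeConn_adj_ll {V₁ V₂ : Type*} (G₁ : SimpleGraph V₁) (G₂ : SimpleGraph V₂)
    (u : V₁) (v : V₂) (a b : V₁) :
    (oneEdgeConn G₁ G₂ u v).Adj (Sum.inl a) (Sum.inl b) ↔ G₁.Adj a b := by
  simp only [oneEdgeConn, SimpleGraph.fromRel_adj]
  constructor
  · rintro ⟨_, h | h⟩; exact h; exact h.symm
  · intro h; exact ⟨by simp [G₁.ne_of_adj h], Or.inl h⟩

lemma oneEdgeConn_adj_rr {V₁ V₂ : Type*} (G₁ : SimpleGraph V₁) (G₂ : SimpleGraph V₂)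
    (u : V₁) (v : V₂) (a b : V₂) :
    (oneEdgeConn G₁ G₂ u v).Adj (Sum.inr a) (Sum.inr b) ↔ G₂.Adj a b := by
  simp only [oneEdgeConn, SimpleGraph.fromRel_adj]
  constructor
  · rintro ⟨_, h | h⟩; exact h; exact h.symm
  · intro h; exact ⟨by simp [G₂.ne_of_adj h], Or.inl h⟩

lemma oneEdgeConn_adj_lr {V₁ V₂ : Type*} (G₁ : SimpleGraph V₁) (G₂ : SimpleGraph V₂)
    (u : V₁) (v : V₂) (a : V₁) (b : V₂) :
    (oneEdgeConn G₁ G₂ u v).Adj (Sum.inl a) (Sum.inr b) ↔ (a = u ∧ b = v) := by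
  simp only [oneEdgeConn, SimpleGraph.fromRel_adj]
  constructor
  · rintro ⟨_, h | h⟩; exact h; exact h.elim
  · intro h; exact ⟨by simp, Or.inl h⟩

lemma oneEdgeConn_adj_rl {V₁ V₂ : Type*} (G₁ : SimpleGraph V₁) (G₂ : SimpleGraph V₂)
    (u : V₁) (v : V₂) (a : V₂) (b : V₁) :
    (oneEdgeConn G₁ G₂ u v).Adj (Sum.inr a) (Sum.inl b) ↔ (b = u ∧ a = v) := by
  rw [SimpleGraph.adj_comm, oneEdgeConn_adj_lr]

/-- If `X`, `Y` are eigenvectors of `L(G₁)`, `L(G₂)` for the eigenvalue `2`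
with `X u ≠ 0` and `Y v ≠ 0`, then `Z = (X, (X u / Y v)·Y)` is an eigenvector of
`L(G₁ ⊙ G₂)` for the eigenvalue `2`; in particular `2` is an eigenvalue of `L(G₁ ⊙ G₂)`. -/
theorem oneEdgeConn_eigenvector_glue
    {V₁ V₂ : Type*} [Fintype V₁] [Fintype V₂] [DecidableEq V₁] [DecidableEq V₂]
    (G₁ : SimpleGraph V₁) (G₂ : SimpleGraph V₂) (u : V₁) (v : V₂)
    (X : V₁ → ℝ) (Y : V₂ → ℝ) (hX : X ≠ 0) (hY : Y ≠ 0)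
    (hX2 : (G₁.lapMatrix ℝ).mulVec X = (2 : ℝ) • X)
    (hY2 : (G₂.lapMatrix ℝ).mulVec Y = (2 : ℝ) • Y)
    (hXu : X u ≠ 0) (hYv : Y v ≠ 0) :
    (((oneEdgeConn G₁ G₂ u v).lapMatrix ℝ).mulVec
        (Sum.elim X (fun b => (X u / Y v) * Y b)) =
      (2 : ℝ) • Sum.elim X (fun b => (X u / Y v) * Y b)) ∧
    ∃ Z : (V₁ ⊕ V₂) → ℝ, Z ≠ 0 ∧
      ((oneEdgeConn G₁ G₂ u v).lapMatrix ℝ).mulVec Z = (2 : ℝ) • Z := by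
  set k : ℝ := X u / Y v with hk
  have hkY : k * Y v = X u := div_mul_cancel₀ (X u) hYv
  set Z : (V₁ ⊕ V₂) → ℝ := Sum.elim X (fun b => k * Y b) with hZ
  have key : ((oneEdgeConn G₁ G₂ u v).lapMatrix ℝ).mulVec Z = (2 : ℝ) • Z := by
    funext w
    rw [lap_mulVec_sum, Fintype.sum_sum_type]
    cases w with
    | inl a =>
      have e1 : ∀ b : V₁,
          (if (oneEdgeConn G₁ G₂ u v).Adj (Sum.inl a) (Sum.inl b)
            then Z (Sum.inl a) - Z (Sum.inl b) else 0)
          = if G₁.Adj a b then X a - X b else 0 := by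
        intro b; rw [oneEdgeConn_adj_ll]; rfl
      have e2 : ∀ b : V₂,
          (if (oneEdgeConn G₁ G₂ u v).Adj (Sum.inl a) (Sum.inr b)
            then Z (Sum.inl a) - Z (Sum.inr b) else 0)
          = if b = v then (if a = u then X a - k * Y b else 0) else 0 := by
        intro b; rw [oneEdgeConn_adj_lr]
        by_cases h1 : a = u <;> by_cases h2 : b = v <;> simp [hZ, h1, h2]
      simp only [e1, e2]
      rw [Finset.sum_ite_eq' Finset.univ v (fun b => if a = u then X a - k * Y b else 0)]
      have hsum1 : ∑ b : V₁, (if G₁.Adj a b then X a - X b else 0) = 2 * X a := by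
        rw [← lap_mulVec_sum, hX2]; simp
      simp only [Finset.mem_univ, if_true, hsum1]
      by_cases h1 : a = u
      · subst h1; rw [if_pos rfl, hkY]; simp [hZ]
      · simp [hZ, h1]
    | inr a =>
      have e1 : ∀ b : V₁,
          (if (oneEdgeConn G₁ G₂ u v).Adj (Sum.inr a) (Sum.inl b)
            then Z (Sum.inr a) - Z (Sum.inl b) else 0)
          = if b = u then (if a = v then k * Y a - X b else 0) else 0 := by
        intro b; rw [oneEdgeConn_adj_rl]
        by_cases h1 : a = v <;> by_cases h2 : b = u <;> simp [hZ, h1, h2]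
      have e2 : ∀ b : V₂,
          (if (oneEdgeConn G₁ G₂ u v).Adj (Sum.inr a) (Sum.inr b)
            then Z (Sum.inr a) - Z (Sum.inr b) else 0)
          = k * (if G₂.Adj a b then Y a - Y b else 0) := by
        intro b; rw [oneEdgeConn_adj_rr]
        by_cases h : G₂.Adj a b <;> simp [hZ, h, mul_sub]
      simp only [e1, e2]
      rw [Finset.sum_ite_eq' Finset.univ u (fun b => if a = v then k * Y a - X b else 0),
        ← Finset.mul_sum]
      have hsum2 : ∑ b : V₂, (if G₂.Adj a b then Y a - Y b else 0) = 2 * Y a := by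
        rw [← lap_mulVec_sum, hY2]; simp
      simp only [Finset.mem_univ, if_true, hsum2]
      by_cases h1 : a = v
      · subst h1; rw [if_pos rfl, hkY]; simp [hZ, hk]; field_simp
      · simp [hZ, hk, h1]; ring
  refine ⟨key, Z, fun h => hXu ?_, key⟩
  have := congrFun h (Sum.inl u)
  simpa [hZ] using this
end

section
/- Let G be a unicyclic graph with a perfect matching M obtained as G = (G \ {u, v}) ⊙ S₂ where u is a pendant vertex at maximal distance from the cycle in its attached tree, v is its neighbor of degree 2, and S₂ is the edge uv. If X is an eigenvector of L(G \ {u,v}) for eigenvalue 2 and w is the neighbor of v in G \ {u,v}, then Z defined by Z = X on V(G) \ {u,v}, Z(v) = x(w), Z(u) = −x(w) is an eigenvector of L(G) for eigenvalue 2. -/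
open scoped Classical

/-- Let `G` be a unicyclic graph with a perfect matching, `u` a pendant vertex
at maximal distance from the cycle within its attached tree, `v` its neighbor with
`d_G(v) = 2`, and `w` the other neighbor of `v`. If `X` is an eigenvector of
`L(G \ {u,v})` for the eigenvalue `2`, then `Z` with `Z = X` on `V \ {u,v}`,
`Z v = X w`, `Z u = -X w` is an eigenvector of `L(G)` for the eigenvalue `2`. -/
theorem unicyclic_extend_eigenvector_two
    {V : Type*} [Fintype V] [DecidableEq V]
    (G : SimpleGraph V) (hconn : G.Connected)
    (huni : G.edgeFinset.card = Fintype.card V)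
    (M : G.Subgraph) (hM : M.IsPerfectMatching)
    (u v w : V) [DecidableRel G.Adj]
    (hdu : G.degree u = 1) (huv : G.Adj u v) (hdv : G.degree v = 2) (hvw : G.Adj v w)
    (hwu : w ≠ u) (hwv : w ≠ v)
    -- the (unique) cycle of `G`:
    (a : V) (wc : G.Walk a a) (hwc : wc.IsCycle)
    -- `u` is at maximal distance from the cycle within its attached tree
    -- (the component of `u` after deleting the cycle edges):
    (hmax : ∀ x : V, (G.deleteEdges {e | e ∈ wc.edges}).Reachable x u →
      (wc.support.toFinset.image fun b => G.dist x b).min ≤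
        (wc.support.toFinset.image fun b => G.dist u b).min)
    (X : {x : V // x ≠ u ∧ x ≠ v} → ℝ) (hXne : X ≠ 0)
    (hX : ((G.induce {x : V | x ≠ u ∧ x ≠ v}).lapMatrix ℝ).mulVec X = (2 : ℝ) • X) :
    (fun x : V => if hx : x ≠ u ∧ x ≠ v then X ⟨x, hx⟩
        else if x = v then X ⟨w, hwu, hwv⟩ else -X ⟨w, hwu, hwv⟩) ≠ 0 ∧
      (G.lapMatrix ℝ).mulVec
        (fun x : V => if hx : x ≠ u ∧ x ≠ v then X ⟨x, hx⟩
          else if x = v then X ⟨w, hwu, hwv⟩ else -X ⟨w, hwu, hwv⟩) =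
      (2 : ℝ) • (fun x : V => if hx : x ≠ u ∧ x ≠ v then X ⟨x, hx⟩
          else if x = v then X ⟨w, hwu, hwv⟩ else -X ⟨w, hwu, hwv⟩) := by
  have huv' : u ≠ v := huv.ne
  set Z : V → ℝ := fun x : V => if hx : x ≠ u ∧ x ≠ v then X ⟨x, hx⟩
      else if x = v then X ⟨w, hwu, hwv⟩ else -X ⟨w, hwu, hwv⟩ with hZdef
  -- neighborhood of u is {v}
  have hNu : ∀ y, G.Adj u y ↔ y = v := by
    intro y
    refine ⟨fun h => ?_, fun h => h ▸ huv⟩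
    by_contra hy
    have hsub : ({y, v} : Finset V) ⊆ G.neighborFinset u := by
      intro z hz
      simp only [Finset.mem_insert, Finset.mem_singleton] at hz
      rcases hz with rfl | rfl
      · exact (SimpleGraph.mem_neighborFinset _ _ _).2 h
      · exact (SimpleGraph.mem_neighborFinset _ _ _).2 huv
    have hc := Finset.card_le_card hsub
    rw [Finset.card_insert_of_notMem (by simpa using hy), Finset.card_singleton,
      SimpleGraph.card_neighborFinset_eq_degree, hdu] at hc
    omega
  -- neighborhood of v is {u, w}
  have hNv : ∀ y, G.Adj v y ↔ y = u ∨ y = w := by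
    intro y
    refine ⟨fun h => ?_, fun h => by rcases h with rfl | rfl; exacts [huv.symm, hvw]⟩
    by_contra hy
    push_neg at hy
    have hsub : ({y, u, w} : Finset V) ⊆ G.neighborFinset v := by
      intro z hz
      simp only [Finset.mem_insert, Finset.mem_singleton] at hz
      rcases hz with rfl | rfl | rfl
      · exact (SimpleGraph.mem_neighborFinset _ _ _).2 h
      · exact (SimpleGraph.mem_neighborFinset _ _ _).2 huv.symm
      · exact (SimpleGraph.mem_neighborFinset _ _ _).2 hvw
    have hc := Finset.card_le_card hsub
    rw [Finset.card_insert_of_notMem (by simp [hy.1, hy.2]),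
      Finset.card_insert_of_notMem (by simpa using hwu.symm), Finset.card_singleton,
      SimpleGraph.card_neighborFinset_eq_degree, hdv] at hc
    omega
  have hZu : Z u = -X ⟨w, hwu, hwv⟩ := by simp [hZdef, huv']
  have hZv : Z v = X ⟨w, hwu, hwv⟩ := by simp [hZdef]
  have hZx : ∀ (x : V) (hx : x ≠ u ∧ x ≠ v), Z x = X ⟨x, hx⟩ := by
    intro x hx; simp [hZdef, hx.1, hx.2]
  constructor
  · intro h0
    apply hXne
    funext p
    have h1 := congrFun h0 (p : V)
    rw [hZx p.val p.2] at h1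
    simpa using h1
  · funext x
    simp only [Pi.smul_apply, smul_eq_mul, SimpleGraph.lapMatrix_mulVec_apply]
    rcases eq_or_ne x u with rfl | hxu
    · have hN : G.neighborFinset x = {v} := by
        ext y; simp [SimpleGraph.mem_neighborFinset, hNu]
      rw [hN, Finset.sum_singleton, hdu, hZu, hZv]
      push_cast; ring
    rcases eq_or_ne x v with rfl | hxv
    · have hN : G.neighborFinset x = {u, w} := by
        ext y; simp [SimpleGraph.mem_neighborFinset, hNv]
      rw [hN, Finset.sum_pair hwu.symm, hdv, hZu, hZv, hZx w ⟨hwu, hwv⟩]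
      push_cast; ring
    · -- generic vertex x ≠ u, x ≠ v
      have hx : x ≠ u ∧ x ≠ v := ⟨hxu, hxv⟩
      set p : {y : V // y ≠ u ∧ y ≠ v} := ⟨x, hx⟩ with hp
      have hXp := congrFun hX p
      rw [SimpleGraph.lapMatrix_mulVec_apply] at hXp
      simp only [Pi.smul_apply, smul_eq_mul] at hXp
      set G' := G.induce {y : V | y ≠ u ∧ y ≠ v} with hG'
      have hadju : ∀ y, G.Adj x y → y ≠ u := by
        intro y h hy
        subst hy
        exact hxv ((hNu x).1 h.symm)
      have himg : (G'.neighborFinset p).image Subtype.val = (G.neighborFinset x).erase v := by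
        ext y
        simp only [Finset.mem_image, SimpleGraph.mem_neighborFinset, Finset.mem_erase]
        constructor
        · rintro ⟨q, hq, rfl⟩
          exact ⟨q.2.2, hq⟩
        · intro ⟨hyv, hadj⟩
          exact ⟨⟨y, hadju y hadj, hyv⟩, hadj, rfl⟩
      have hdeg : ((G.neighborFinset x).erase v).card = G'.degree p := by
        rw [← himg, Finset.card_image_of_injective _ Subtype.val_injective,
          SimpleGraph.card_neighborFinset_eq_degree]
      have hsum : ∑ y ∈ (G.neighborFinset x).erase v, Z y = ∑ q ∈ G'.neighborFinset p, X q := by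
        rw [← himg, Finset.sum_image (fun a _ b _ h => Subtype.val_injective h)]
        exact Finset.sum_congr rfl fun q _ => hZx q.val q.2
      have hZxp : Z x = X p := hZx x hx
      by_cases hvx : v ∈ G.neighborFinset x
      · -- then x = w
        have hxw : x = w := by
          rcases (hNv x).1 ((SimpleGraph.mem_neighborFinset _ _ _).1 hvx).symm with h | h
          · exact absurd h hxu
          · exact h
        have hZvXp : Z v = X p := by
          rw [hZv]; congr 1; exact Subtype.ext hxw.symm
        have hins := Finset.insert_erase hvx
        rw [← SimpleGraph.card_neighborFinset_eq_degree, ← hins,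
          Finset.sum_insert (Finset.notMem_erase _ _),
          Finset.card_insert_of_notMem (Finset.notMem_erase _ _), hdeg, hsum, hZvXp, hZxp]
        push_cast
        linarith [hXp]
      · rw [← Finset.erase_eq_of_notMem hvx, hsum, hZxp,
          ← SimpleGraph.card_neighborFinset_eq_degree, ← Finset.erase_eq_of_notMem hvx, hdeg]
        exact hXp
end

section
/- If a tree T of order n has 2 as a Laplacian eigenvalue, then n is even. -/
open scoped Classical
open Finset SimpleGraph

/-- In an acyclic graph, a `ZMod 2`-valued vector in the kernel of the Laplacian
(expressed as `∑ neighbors = deg v * x v`) is constant across every edge. -/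
theorem acyclic_parity_const_aux18 {V : Type*} [Fintype V] [DecidableEq V]
    (T : SimpleGraph V) [DecidableRel T.Adj] (hT : T.IsAcyclic) (x : V → ZMod 2)
    (hx : ∀ v, ∑ u ∈ T.neighborFinset v, x u = (T.degree v : ZMod 2) * x v) :
    ∀ u v, T.Adj u v → x u = x v := by
  intro u v huv
  by_contra hne
  have hbridge : ¬ (T \ SimpleGraph.fromEdgeSet {s(u, v)}).Reachable u v :=
    ((SimpleGraph.isAcyclic_iff_forall_adj_isBridge.mp hT) huv)
  set G' := T \ SimpleGraph.fromEdgeSet {s(u, v)} with hG'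
  set S : Set V := {w | G'.Reachable u w} with hS
  have huS : u ∈ S := SimpleGraph.Reachable.refl u
  have hvS : v ∉ S := hbridge
  have hSclosed : ∀ ⦃a b : V⦄, a ∈ S → T.Adj a b → s(a, b) ≠ s(u, v) → b ∈ S := by
    intro a b ha hab hne'
    refine ha.trans (SimpleGraph.Adj.reachable ?_)
    simp only [hG', SimpleGraph.sdiff_adj, SimpleGraph.fromEdgeSet_adj]
    exact ⟨hab, fun h => hne' h.1⟩
  set K : SimpleGraph V := {
    Adj := fun a b => T.Adj a b ∧ x a ≠ x b ∧ a ∈ S ∧ b ∈ S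
    symm := ⟨by rintro a b ⟨h1, h2, h3, h4⟩; exact ⟨h1.symm, Ne.symm h2, h4, h3⟩⟩
    loopless := ⟨by rintro a ⟨h1, -⟩; exact T.irrefl h1⟩ } with hK
  haveI : DecidableRel K.Adj := fun a b => Classical.propDecidable _
  have hKnb : ∀ w, K.neighborFinset w =
      ((T.neighborFinset w).filter (fun z => x z ≠ x w)).filter (fun z => z ∈ S ∧ w ∈ S) := by
    intro w
    ext z
    simp only [mem_neighborFinset, mem_filter, hK]
    constructor
    · rintro ⟨h1, h2, h3, h4⟩; exact ⟨⟨h1, Ne.symm h2⟩, h4, h3⟩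
    · rintro ⟨⟨h1, h2⟩, h3, h4⟩; exact ⟨h1, Ne.symm h2, h4, h3⟩
  -- each vertex has an even number of bichromatic edges
  have hHdeg : ∀ w, Even ((T.neighborFinset w).filter (fun z => x z ≠ x w)).card := by
    intro w
    have hone : ∀ a b : ZMod 2, a ≠ b → a - b = 1 := by decide
    have h0 : ∑ z ∈ T.neighborFinset w, (x z - x w) = 0 := by
      rw [Finset.sum_sub_distrib, hx w, Finset.sum_const, card_neighborFinset_eq_degree]
      simp [nsmul_eq_mul]
    have h1 : ∑ z ∈ T.neighborFinset w, (if x z ≠ x w then (1 : ZMod 2) else 0) = 0 := by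
      have : ∀ z ∈ T.neighborFinset w,
          (if x z ≠ x w then (1 : ZMod 2) else 0) = x z - x w := by
        intro z _
        by_cases h : x z = x w
        · simp [h]
        · simp only [h, if_pos, ne_eq, not_false_iff, if_true]
          exact (hone _ _ h).symm
      rw [Finset.sum_congr rfl this, h0]
    rw [Finset.sum_boole] at h1
    exact even_iff_two_dvd.mpr ((ZMod.natCast_eq_zero_iff _ 2).mp h1)
  set S' : Finset V := Finset.univ.filter (fun w => w ∈ S) with hS'
  -- total bichromatic degree over S is even
  have hsum1 : Even (∑ w ∈ S', ((T.neighborFinset w).filter (fun z => x z ≠ x w)).card) := by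
    apply Finset.even_sum
    intro w _
    exact hHdeg w
  -- total K-degree over S is even (handshake)
  have hsum2 : Even (∑ w ∈ S', K.degree w) := by
    have : ∑ w ∈ S', K.degree w = ∑ w, K.degree w := by
      refine Finset.sum_subset (Finset.subset_univ S') ?_
      intro w _ hw
      simp only [hS', Finset.mem_filter, Finset.mem_univ, true_and] at hw
      rw [SimpleGraph.degree, hKnb, Finset.card_eq_zero]
      apply Finset.filter_false_of_mem
      rintro z hz ⟨-, h⟩
      exact hw h
    rw [this, SimpleGraph.sum_degrees_eq_twice_card_edges]
    exact even_two_mul _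
  -- crossing edges
  have hcross : ∀ w ∈ S', ((T.neighborFinset w).filter (fun z => x z ≠ x w)).filter
      (fun z => ¬(z ∈ S ∧ w ∈ S)) = if w = u then {v} else ∅ := by
    intro w hw
    simp only [hS', Finset.mem_filter, Finset.mem_univ, true_and] at hw
    ext z
    simp only [Finset.mem_filter, mem_neighborFinset]
    constructor
    · rintro ⟨⟨hadj, hxz⟩, hnz⟩
      have hzS : z ∉ S := fun h => hnz ⟨h, hw⟩
      have heq : s(w, z) = s(u, v) := by
        by_contra h
        exact hzS (hSclosed hw hadj h)
      rw [Sym2.eq_iff] at heq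
      rcases heq with ⟨rfl, rfl⟩ | ⟨rfl, rfl⟩
      · simp
      · exact absurd hw hvS
    · intro hz
      by_cases h : w = u
      · subst h
        rw [if_pos rfl, Finset.mem_singleton] at hz
        subst hz
        exact ⟨⟨huv, fun h => hne h.symm⟩, fun h => hvS h.1⟩
      · simp [h] at hz
  -- combine: for each w in S', full filter card = K-degree + crossing card
  have hsplit : ∀ w ∈ S',
      ((T.neighborFinset w).filter (fun z => x z ≠ x w)).card
        = K.degree w + (if w = u then 1 else 0) := by
    intro w hw
    rw [SimpleGraph.degree, hKnb]
    have := Finset.card_filter_add_card_filter_not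
      (s := (T.neighborFinset w).filter (fun z => x z ≠ x w))
      (p := fun z => z ∈ S ∧ w ∈ S)
    rw [hcross w hw] at this
    rcases eq_or_ne w u with rfl | h
    · simp only [eq_self_iff_true, if_true, Finset.card_singleton] at this ⊢
      omega
    · simp only [if_neg h] at this ⊢
      simpa using this.symm
  rw [Finset.sum_congr rfl hsplit, Finset.sum_add_distrib] at hsum1
  have huS' : u ∈ S' := by simp [hS', huS]
  rw [Finset.sum_ite_eq' S' u (fun _ => 1), if_pos huS'] at hsum1
  rcases hsum1 with ⟨m, hm⟩
  rcases hsum2 with ⟨k, hk⟩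
  omega

/-- From a real eigenvector for eigenvalue `2`, extract an integer one
which is not divisible by `2`. -/
theorem exists_int_eigvec_aux18 {V : Type*} [Fintype V] [DecidableEq V]
    (T : SimpleGraph V) [DecidableRel T.Adj]
    (h2 : ∃ X : V → ℝ, X ≠ 0 ∧ (T.lapMatrix ℝ).mulVec X = (2 : ℝ) • X) :
    ∃ Z : V → ℤ, (¬ ∀ v, (2 : ℤ) ∣ Z v) ∧
      ∀ v, (T.degree v : ℤ) * Z v - ∑ u ∈ T.neighborFinset v, Z u = 2 * Z v := by
  obtain ⟨X, hX0, hXe⟩ := h2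
  set Mr : Matrix V V ℝ := T.lapMatrix ℝ - (2 : ℝ) • 1 with hMr
  set Mq : Matrix V V ℚ := T.lapMatrix ℚ - (2 : ℚ) • 1 with hMq
  have hmap : Mq.map (Rat.cast : ℚ → ℝ) = Mr := by
    ext i j
    simp only [hMq, hMr, Matrix.map_apply, Matrix.sub_apply, Matrix.smul_apply,
      Matrix.one_apply, SimpleGraph.lapMatrix, SimpleGraph.degMatrix,
      SimpleGraph.adjMatrix_apply, Matrix.of_apply, Matrix.diagonal_apply, smul_eq_mul]
    split_ifs <;> push_cast <;> ring
  have hMrX : Mr.mulVec X = 0 := by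
    rw [hMr, Matrix.sub_mulVec, Matrix.smul_mulVec, Matrix.one_mulVec, hXe, sub_self]
  have hdetr : Mr.det = 0 := Matrix.exists_mulVec_eq_zero_iff.mp ⟨X, hX0, hMrX⟩
  have hdetq : Mq.det = 0 := by
    have := (Rat.castHom ℝ).map_det Mq
    rw [show (Rat.castHom ℝ).mapMatrix Mq = Mr from hmap, hdetr] at this
    have h0 : ((Mq.det : ℚ) : ℝ) = 0 := this
    exact_mod_cast h0
  obtain ⟨w, hw0, hw⟩ := Matrix.exists_mulVec_eq_zero_iff.mpr hdetq
  -- entrywise equation over ℚ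
  have heq : ∀ v, (T.degree v : ℚ) * w v - ∑ u ∈ T.neighborFinset v, w u = 2 * w v := by
    intro v
    have := congrFun hw v
    rw [hMq, Matrix.sub_mulVec, Matrix.smul_mulVec, Matrix.one_mulVec] at this
    have h' := congrFun hw v
    have h2' : (T.lapMatrix ℚ).mulVec w v - (2 : ℚ) • w v = 0 := by
      simpa [hMq, Matrix.sub_mulVec, Matrix.smul_mulVec, Matrix.one_mulVec] using h'
    rw [SimpleGraph.lapMatrix_mulVec_apply] at h2'
    have := sub_eq_zero.mp h2'
    simpa [smul_eq_mul] using this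
  -- clear denominators
  set c : ℤ := ∏ i, ((w i).den : ℤ) with hc
  have hcne : c ≠ 0 := by
    rw [hc]
    apply Finset.prod_ne_zero_iff.mpr
    intro i _
    exact_mod_cast (w i).den_nz
  have hdvd : ∀ i, ((w i).den : ℤ) ∣ c := fun i =>
    Finset.dvd_prod_of_mem _ (Finset.mem_univ i)
  set Z0 : V → ℤ := fun i => (w i).num * (c / ((w i).den : ℤ)) with hZ0
  have hcast : ∀ i, ((Z0 i : ℚ)) = (c : ℚ) * w i := by
    intro i
    have h1 : ((w i).den : ℤ) * (c / ((w i).den : ℤ)) = c := Int.mul_ediv_cancel' (hdvd i)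
    have hden : ((w i).den : ℚ) ≠ 0 := by exact_mod_cast (w i).den_nz
    have h2 : ((w i).num : ℚ) = w i * ((w i).den : ℚ) := by
      have h3 := Rat.num_div_den (w i)
      rw [div_eq_iff hden] at h3
      rw [h3]
    calc ((Z0 i : ℚ)) = ((w i).num : ℚ) * ((c / ((w i).den : ℤ) : ℤ) : ℚ) := by push_cast [hZ0]; ring
      _ = w i * (((w i).den : ℚ) * ((c / ((w i).den : ℤ) : ℤ) : ℚ)) := by rw [h2]; ring
      _ = (c : ℚ) * w i := by
          rw [show ((w i).den : ℚ) * ((c / ((w i).den : ℤ) : ℤ) : ℚ) = (c : ℚ) by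
            exact_mod_cast congrArg (fun t : ℤ => (t : ℚ)) h1]
          ring
  have hZ0eq : ∀ v, (T.degree v : ℤ) * Z0 v - ∑ u ∈ T.neighborFinset v, Z0 u = 2 * Z0 v := by
    intro v
    have key : (((T.degree v : ℤ) * Z0 v - ∑ u ∈ T.neighborFinset v, Z0 u : ℤ) : ℚ)
        = ((2 * Z0 v : ℤ) : ℚ) := by
      push_cast
      simp_rw [hcast]
      rw [← Finset.mul_sum]
      linear_combination (c : ℚ) * heq v
    exact_mod_cast key
  have hZ0ne : Z0 ≠ 0 := by
    intro h
    apply hw0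
    funext i
    have hi : Z0 i = 0 := congrFun h i
    have := hcast i
    rw [hi] at this
    simp only [Int.cast_zero] at this
    have : (c : ℚ) * w i = 0 := this.symm
    rcases mul_eq_zero.mp this with h' | h'
    · exact absurd (by exact_mod_cast h' : c = 0) hcne
    · exact h'
  -- divide by the gcd
  set g : ℤ := Finset.univ.gcd Z0 with hg
  have hgdvd : ∀ v, g ∣ Z0 v := fun v => Finset.gcd_dvd (Finset.mem_univ v)
  have hgne : g ≠ 0 := by
    intro h
    apply hZ0ne
    funext v
    exact (Finset.gcd_eq_zero_iff.mp h) v (Finset.mem_univ v)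
  refine ⟨fun v => Z0 v / g, ?_, ?_⟩
  · intro hall
    have : g * 2 ∣ g := by
      apply Finset.dvd_gcd
      intro v _
      obtain ⟨t, ht⟩ := hall v
      have hz : Z0 v / g = 2 * t := ht
      have : Z0 v = g * (Z0 v / g) := (Int.mul_ediv_cancel' (hgdvd v)).symm
      rw [this, hz]
      exact ⟨t, by ring⟩
    obtain ⟨t, ht⟩ := this
    have h1 : g * 1 = g * (2 * t) := by
      conv_lhs => rw [mul_one, ht]
      ring
    have := mul_left_cancel₀ hgne h1
    omega
  · intro v
    have hexp : ∀ i, Z0 i = g * (Z0 i / g) := fun i => (Int.mul_ediv_cancel' (hgdvd i)).symm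
    apply mul_left_cancel₀ hgne
    calc g * ((T.degree v : ℤ) * (Z0 v / g) - ∑ u ∈ T.neighborFinset v, Z0 u / g)
        = (T.degree v : ℤ) * (g * (Z0 v / g)) - ∑ u ∈ T.neighborFinset v, g * (Z0 u / g) := by
          rw [mul_sub, Finset.mul_sum]
          ring
      _ = (T.degree v : ℤ) * Z0 v - ∑ u ∈ T.neighborFinset v, Z0 u := by
          simp_rw [← hexp]
      _ = 2 * Z0 v := hZ0eq v
      _ = g * (2 * (Z0 v / g)) := by
          rw [show g * (2 * (Z0 v / g)) = 2 * (g * (Z0 v / g)) from by ring, ← hexp v]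

/-- If a tree `T` of order `n` has `2` as a Laplacian eigenvalue,
then `n` is even. -/
theorem tree_lap_eigenvalue_two_even_order {V : Type*} [Fintype V] [DecidableEq V]
    (T : SimpleGraph V) [DecidableRel T.Adj] (hT : T.IsTree)
    (h2 : ∃ X : V → ℝ, X ≠ 0 ∧ (T.lapMatrix ℝ).mulVec X = (2 : ℝ) • X) :
    Even (Fintype.card V) := by
  obtain ⟨Z, hZodd, hZeq⟩ := exists_int_eigvec_aux18 T h2
  set x : V → ZMod 2 := fun v => ((Z v : ZMod 2)) with hx
  -- the reduction mod 2 is in the kernel of the Laplacian over ZMod 2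
  have hxker : ∀ v, ∑ u ∈ T.neighborFinset v, x u = (T.degree v : ZMod 2) * x v := by
    intro v
    have := congrArg (fun t : ℤ => ((t : ZMod 2))) (hZeq v)
    push_cast at this
    have h20 : (2 : ZMod 2) = 0 := by decide
    rw [h20, zero_mul] at this
    have := sub_eq_zero.mp this
    simpa [hx] using this.symm
  -- x is constant across edges, hence constant
  have hadj : ∀ u v, T.Adj u v → x u = x v :=
    acyclic_parity_const_aux18 T hT.IsAcyclic x hxker
  have hwalk : ∀ {a b : V} (_ : T.Walk a b), x a = x b := by
    intro a b p
    induction p with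
    | nil => rfl
    | cons h _ ih => exact (hadj _ _ h).trans ih
  have hconst : ∀ a b : V, x a = x b := by
    intro a b
    obtain ⟨p⟩ := hT.isConnected.preconnected a b
    exact hwalk p
  -- some entry of Z is odd, hence all entries of x are 1
  push_neg at hZodd
  obtain ⟨v₀, hv₀⟩ := hZodd
  have hxv₀ : x v₀ = 1 := by
    have : (Z v₀ : ZMod 2) ≠ 0 := by
      intro h
      exact hv₀ ((ZMod.intCast_zmod_eq_zero_iff_dvd _ 2).mp h)
    have hall : ∀ a : ZMod 2, a ≠ 0 → a = 1 := by decide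
    exact hall _ this
  have hone : ∀ v, x v = 1 := fun v => (hconst v v₀).trans hxv₀
  -- the sum of the entries of Z is zero
  have hswap : ∑ v, ∑ u ∈ T.neighborFinset v, Z u = ∑ v, (T.degree v : ℤ) * Z v := by
    have h1 : ∀ v, ∑ u ∈ T.neighborFinset v, Z u
        = ∑ u, (if T.Adj v u then Z u else 0) := by
      intro v
      rw [SimpleGraph.neighborFinset_eq_filter, Finset.sum_filter]
    simp_rw [h1]
    rw [Finset.sum_comm]
    refine Finset.sum_congr rfl fun u _ => ?_
    have h2 : (Finset.univ.filter (fun v => T.Adj v u)) = T.neighborFinset u := by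
      ext v
      simp [mem_neighborFinset, adj_comm]
    rw [← Finset.sum_filter, h2, Finset.sum_const, card_neighborFinset_eq_degree,
      nsmul_eq_mul]
  have hsumz : ∑ v, Z v = 0 := by
    have := Finset.sum_congr rfl (fun v (_ : v ∈ Finset.univ) => hZeq v)
    rw [Finset.sum_sub_distrib, hswap, sub_self] at this
    have h2 : (2 : ℤ) * ∑ v, Z v = 0 := by
      rw [Finset.mul_sum]
      exact this.symm
    omega
  -- reduce mod 2
  have hfinal : ((Fintype.card V : ℕ) : ZMod 2) = 0 := by
    have := congrArg (fun t : ℤ => ((t : ZMod 2))) hsumz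
    push_cast at this
    simp_rw [← hx] at this
    rw [Finset.sum_congr rfl (fun v _ => hone v), Finset.sum_const, Finset.card_univ,
      nsmul_eq_mul, mul_one] at this
    exact this
  exact even_iff_two_dvd.mpr ((ZMod.natCast_eq_zero_iff _ 2).mp hfinal)
end
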